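/- Let C ↔ f : [a,b] → ℝ^M and D ↔ g : [c,d] → ℝ^M (a < b, c < d) be continuous rectifiable curves that are Fréchet equivalent, and let F be a parametric integrand. Then the line integrals of F along C and along D (which exist) are equal: ∫_C F = ∫_D F. -/

import Mathlib

open scoped BigOperators ENNReal
open MeasureTheory Filter

noncomputable section

/-- A partition `a = x 0 < x 1 < ⋯ < x n = b` of the interval `[a,b]`. -/
structure IntervalPartition (a b : ℝ) where
  n : ℕ
  x : Fin (n + 1) → ℝ
  mono : StrictMono x
  first : x 0 = a
  last : x (Fin.last n) = b

/-- The mesh `‖P‖ = maxᵢ (xᵢ − xᵢ₋₁)` of a partition. -/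
def IntervalPartition.mesh {a b : ℝ} (P : IntervalPartition a b) : ℝ :=
  ⨆ i : Fin P.n, (P.x i.succ - P.x i.castSucc)

/-- The inscribed sum `V(f;P) = Σᵢ ‖f(xᵢ) − f(xᵢ₋₁)‖`. -/
def inscribedSum {M : ℕ} (f : ℝ → EuclideanSpace ℝ (Fin M)) {a b : ℝ}
    (P : IntervalPartition a b) : ℝ :=
  ∑ i : Fin P.n, ‖f (P.x i.succ) - f (P.x i.castSucc)‖

/-- The length `ℓ(C)` of the curve `C ↔ f : [a,b] → ℝ^M`: the supremum of the inscribed sums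
over all partitions of `[a,b]`, a value in `[0,+∞]`. -/
def curveLength {M : ℕ} (f : ℝ → EuclideanSpace ℝ (Fin M)) (a b : ℝ) : ℝ≥0∞ :=
  ⨆ P : IntervalPartition a b, ENNReal.ofReal (inscribedSum f P)

/-- The total variation `T_h[a,b]` of a real function `h` on `[a,b]`. -/
def totalVariation (h : ℝ → ℝ) (a b : ℝ) : ℝ≥0∞ :=
  ⨆ P : IntervalPartition a b, ENNReal.ofReal (∑ i : Fin P.n, |h (P.x i.succ) - h (P.x i.castSucc)|)

/-- The positive variation `T_h⁺[a,b]` of a real function `h` on `[a,b]`. -/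
def posVariation (h : ℝ → ℝ) (a b : ℝ) : ℝ≥0∞ :=
  ⨆ P : IntervalPartition a b,
    ENNReal.ofReal (∑ i : Fin P.n, max (h (P.x i.succ) - h (P.x i.castSucc)) 0)

/-- The negative variation `T_h⁻[a,b]` of a real function `h` on `[a,b]`. -/
def negVariation (h : ℝ → ℝ) (a b : ℝ) : ℝ≥0∞ :=
  ⨆ P : IntervalPartition a b,
    ENNReal.ofReal (∑ i : Fin P.n, max (h (P.x i.castSucc) - h (P.x i.succ)) 0)

/-- `h` is absolutely continuous on `[a,b]`: for every `ε > 0` there is `δ > 0` such that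
`Σᵢ |h(vᵢ) − h(uᵢ)| < ε` for every finite family of pairwise non-overlapping subintervals
`[uᵢ,vᵢ]` of `[a,b]` of total length `< δ`. -/
def AbsContOn (h : ℝ → ℝ) (a b : ℝ) : Prop :=
  ∀ ε > (0 : ℝ), ∃ δ > (0 : ℝ), ∀ n : ℕ, ∀ u v : Fin n → ℝ,
    (∀ i, a ≤ u i ∧ u i ≤ v i ∧ v i ≤ b) →
    (∀ i j, i ≠ j → Set.Ioo (u i) (v i) ∩ Set.Ioo (u j) (v j) = ∅) →
    (∑ i, (v i - u i)) < δ → (∑ i, |h (v i) - h (u i)|) < ε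

/-- `φ` is an increasing homeomorphism of `[a,b]` onto `[c,d]` sending `a` to `c` and `b` to `d`. -/
def IsIncrHomeo (φ : ℝ → ℝ) (a b c d : ℝ) : Prop :=
  ContinuousOn φ (Set.Icc a b) ∧ StrictMonoOn φ (Set.Icc a b) ∧ φ a = c ∧ φ b = d

/-- `f : [a,b] → ℝ^M` and `g : [c,d] → ℝ^M` are Fréchet equivalent. -/
def FrechetEquiv {M : ℕ} (f : ℝ → EuclideanSpace ℝ (Fin M)) (a b : ℝ)
    (g : ℝ → EuclideanSpace ℝ (Fin M)) (c d : ℝ) : Prop :=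
  ∀ ε > (0 : ℝ), ∃ φ : ℝ → ℝ, IsIncrHomeo φ a b c d ∧
    ∀ x ∈ Set.Icc a b, ‖f x - g (φ x)‖ < ε

/-- The Fréchet distance between the curves `C ↔ f : [a,b] → ℝ^M` and `D ↔ g : [c,d] → ℝ^M`. -/
def frechetDist {M : ℕ} (f : ℝ → EuclideanSpace ℝ (Fin M)) (a b : ℝ)
    (g : ℝ → EuclideanSpace ℝ (Fin M)) (c d : ℝ) : ℝ :=
  ⨅ φ : {φ : ℝ → ℝ // IsIncrHomeo φ a b c d}, ⨆ x ∈ Set.Icc a b, ‖f x - g (φ.1 x)‖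

/-- A parametric integrand: a continuous `F : ℝ^M × ℝ^M → ℝ` positively homogeneous of
degree 1 in the second variable. -/
def IsParametricIntegrand {M : ℕ}
    (F : EuclideanSpace ℝ (Fin M) → EuclideanSpace ℝ (Fin M) → ℝ) : Prop :=
  Continuous (fun p : EuclideanSpace ℝ (Fin M) × EuclideanSpace ℝ (Fin M) => F p.1 p.2) ∧
  ∀ K : ℝ, 0 ≤ K → ∀ x t, F x (K • t) = K * F x t

/-- `L` is the line integral `∫_C F` of `F` along the curve `C ↔ f : [a,b] → ℝ^M`:
the limit, as the mesh tends to `0`, of the Riemann-type sums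
`Σᵢ F(f(ξᵢ), f(xᵢ) − f(xᵢ₋₁))` over tagged partitions of `[a,b]`. -/
def IsLineIntegral {M : ℕ} (F : EuclideanSpace ℝ (Fin M) → EuclideanSpace ℝ (Fin M) → ℝ)
    (f : ℝ → EuclideanSpace ℝ (Fin M)) (a b : ℝ) (L : ℝ) : Prop :=
  ∀ ε > (0 : ℝ), ∃ δ > (0 : ℝ), ∀ P : IntervalPartition a b, P.mesh < δ →
    ∀ ξ : Fin P.n → ℝ, (∀ i, ξ i ∈ Set.Icc (P.x i.castSucc) (P.x i.succ)) →
    |(∑ i : Fin P.n, F (f (ξ i)) (f (P.x i.succ) - f (P.x i.castSucc))) - L| < ε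

namespace IntervalPartition

variable {a b : ℝ} (P : IntervalPartition a b)

/-- ℕ-indexed partition points, extended by `b`. -/
def y (k : ℕ) : ℝ := if h : k ≤ P.n then P.x ⟨k, Nat.lt_succ_of_le h⟩ else b

lemma y_eq {k : ℕ} (h : k ≤ P.n) : P.y k = P.x ⟨k, Nat.lt_succ_of_le h⟩ := dif_pos h

lemma y_zero : P.y 0 = a := by
  rw [P.y_eq (Nat.zero_le _)]; exact P.first

lemma y_last : P.y P.n = b := by
  rw [P.y_eq le_rfl]; exact P.last

lemma x_le_last (i : Fin (P.n + 1)) : P.x i ≤ b := by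
  have := P.mono.monotone (Fin.le_last i); rwa [P.last] at this

lemma first_le_x (i : Fin (P.n + 1)) : a ≤ P.x i := by
  have := P.mono.monotone (Fin.zero_le i); rwa [P.first] at this

lemma y_le_last (k : ℕ) : P.y k ≤ b := by
  by_cases hk : k ≤ P.n
  · rw [P.y_eq hk]; exact P.x_le_last _
  · rw [y, dif_neg hk]

lemma y_eq_neg {k : ℕ} (h : ¬ k ≤ P.n) : P.y k = b := dif_neg h

lemma y_mono : Monotone P.y := by
  intro k l hkl
  by_cases hl : l ≤ P.n
  · rw [P.y_eq (le_trans hkl hl), P.y_eq hl]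
    exact P.mono.monotone (by simpa using hkl)
  · rw [P.y_eq_neg hl]; exact P.y_le_last k

lemma y_strict {k l : ℕ} (hkl : k < l) (hl : l ≤ P.n) : P.y k < P.y l := by
  rw [P.y_eq (le_trans (Nat.le_of_lt hkl) hl), P.y_eq hl]
  exact P.mono (by simpa using hkl)

lemma y_mem (hab : a ≤ b) (k : ℕ) : P.y k ∈ Set.Icc a b := by
  by_cases hk : k ≤ P.n
  · rw [P.y_eq hk]; exact ⟨P.first_le_x _, P.x_le_last _⟩
  · rw [y, dif_neg hk]; exact ⟨hab, le_rfl⟩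

lemma first_le_y (k : ℕ) : a ≤ P.y k := by
  have := P.y_mono (Nat.zero_le k); rwa [P.y_zero] at this

lemma n_pos (hab : a < b) : 0 < P.n := by
  rcases Nat.eq_zero_or_pos P.n with h | h
  · exfalso
    have h0 : P.x 0 = a := P.first
    have h1 : P.x (Fin.last P.n) = b := P.last
    have : Fin.last P.n = 0 := by
      ext; simp [h]
    rw [this, h0] at h1
    exact absurd h1 (ne_of_lt hab)
  · exact h

/-- Converting `Fin`-indexed sums over intervals of `P` to `range`-indexed sums. -/
lemma sum_eq {E : Type*} [AddCommMonoid E] (e : ℝ → ℝ → E) :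
    ∑ i : Fin P.n, e (P.x i.castSucc) (P.x i.succ)
      = ∑ j ∈ Finset.range P.n, e (P.y j) (P.y (j + 1)) := by
  rw [← Fin.sum_univ_eq_sum_range (fun j => e (P.y j) (P.y (j + 1))) P.n]
  apply Finset.sum_congr rfl
  intro i _
  have h1 : P.y (i : ℕ) = P.x i.castSucc := by
    rw [P.y_eq (le_of_lt i.isLt)]; exact congrArg P.x (by ext; simp)
  have h2 : P.y ((i : ℕ) + 1) = P.x i.succ := by
    rw [P.y_eq (Nat.succ_le_of_lt i.isLt)]; exact congrArg P.x (by ext; simp)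
  rw [h1, h2]

lemma gap_lt_of_mesh_lt {δ : ℝ} (h : P.mesh < δ) {j : ℕ} (hj : j < P.n) :
    P.y (j + 1) - P.y j < δ := by
  have hne : Nonempty (Fin P.n) := ⟨⟨j, hj⟩⟩
  have hb : BddAbove (Set.range fun i : Fin P.n => P.x i.succ - P.x i.castSucc) :=
    (Set.finite_range _).bddAbove
  have hle : P.x (⟨j, hj⟩ : Fin P.n).succ - P.x (⟨j, hj⟩ : Fin P.n).castSucc ≤ P.mesh :=
    le_ciSup hb _
  have : P.y (j+1) - P.y j ≤ P.mesh := by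
    rw [P.y_eq hj.le, P.y_eq (Nat.succ_le_of_lt hj)]
    exact hle
  linarith

end IntervalPartition

namespace IntervalPartition
variable {a b : ℝ} (P : IntervalPartition a b)

lemma y_castSucc (i : Fin P.n) : P.y (i : ℕ) = P.x i.castSucc := by
  rw [P.y_eq (le_of_lt i.isLt)]; exact congrArg P.x (by ext; simp)

lemma y_succ' (i : Fin P.n) : P.y ((i : ℕ) + 1) = P.x i.succ := by
  rw [P.y_eq (Nat.succ_le_of_lt i.isLt)]; exact congrArg P.x (by ext; simp)

end IntervalPartition
section Tools

variable {E : Type*}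

lemma grouped_sum [AddCommMonoid E] (s : ℕ → ℕ) (hs : Monotone s) (g : ℕ → E) :
    ∀ n : ℕ, ∑ i ∈ Finset.range n, ∑ j ∈ Finset.Ico (s i) (s (i + 1)), g j
      = ∑ j ∈ Finset.Ico (s 0) (s n), g j := by
  intro n
  induction n with
  | zero => simp
  | succ n ih =>
    rw [Finset.sum_range_succ, ih,
      Finset.sum_Ico_consecutive _ (hs (Nat.zero_le n)) (hs (Nat.le_succ n))]

lemma telescope_Ico [AddCommGroup E] (v : ℕ → E) {p q : ℕ} (h : p ≤ q) :
    ∑ j ∈ Finset.Ico p q, (v (j + 1) - v j) = v q - v p := by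
  induction q, h using Nat.le_induction with
  | base => simp
  | succ q hpq ih =>
    rw [Finset.sum_Ico_succ_top hpq, ih]
    abel

lemma sqrt_cauchy_schwarz {ι : Type*} (s : Finset ι) (x y : ι → ℝ) (hx : ∀ i ∈ s, 0 ≤ x i)
    (hy : ∀ i ∈ s, 0 ≤ y i) :
    ∑ i ∈ s, Real.sqrt (x i * y i)
      ≤ Real.sqrt (∑ i ∈ s, x i) * Real.sqrt (∑ i ∈ s, y i) := by
  have h1 : ∀ i ∈ s, Real.sqrt (x i * y i) = Real.sqrt (x i) * Real.sqrt (y i) := by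
    intro i _; exact Real.sqrt_mul (hx i ‹_›) _
  rw [Finset.sum_congr rfl h1]
  have h2 := Finset.sum_mul_sq_le_sq_mul_sq s (fun i => Real.sqrt (x i)) (fun i => Real.sqrt (y i))
  have h3 : ∀ i ∈ s, Real.sqrt (x i) ^ 2 = x i := fun i hi => Real.sq_sqrt (hx i hi)
  have h4 : ∀ i ∈ s, Real.sqrt (y i) ^ 2 = y i := fun i hi => Real.sq_sqrt (hy i hi)
  rw [Finset.sum_congr rfl h3, Finset.sum_congr rfl h4] at h2
  have h5 : 0 ≤ ∑ i ∈ s, Real.sqrt (x i) * Real.sqrt (y i) :=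
    Finset.sum_nonneg fun i hi => mul_nonneg (Real.sqrt_nonneg _) (Real.sqrt_nonneg _)
  calc ∑ i ∈ s, Real.sqrt (x i) * Real.sqrt (y i)
      = Real.sqrt ((∑ i ∈ s, Real.sqrt (x i) * Real.sqrt (y i)) ^ 2) :=
        (Real.sqrt_sq h5).symm
    _ ≤ Real.sqrt ((∑ i ∈ s, x i) * ∑ i ∈ s, y i) := Real.sqrt_le_sqrt h2
    _ = Real.sqrt (∑ i ∈ s, x i) * Real.sqrt (∑ i ∈ s, y i) :=
        Real.sqrt_mul (Finset.sum_nonneg hx) _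

end Tools

section Sums

variable {M : ℕ} (f : ℝ → EuclideanSpace ℝ (Fin M)) {a b : ℝ}

/-- `range`-indexed inscribed sum. -/
def vsum (P : IntervalPartition a b) : ℝ :=
  ∑ j ∈ Finset.range P.n, ‖f (P.y (j + 1)) - f (P.y j)‖

lemma vsum_eq_inscribedSum (P : IntervalPartition a b) : vsum f P = inscribedSum f P :=
  (P.sum_eq fun s t => ‖f t - f s‖).symm

/-- `range`-indexed Riemann sum with tags `τ`. -/
def rsum (F : EuclideanSpace ℝ (Fin M) → EuclideanSpace ℝ (Fin M) → ℝ)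
    (P : IntervalPartition a b) (τ : ℕ → ℝ) : ℝ :=
  ∑ j ∈ Finset.range P.n, F (f (τ j)) (f (P.y (j + 1)) - f (P.y j))

lemma vsum_nonneg (P : IntervalPartition a b) : 0 ≤ vsum f P :=
  Finset.sum_nonneg fun _ _ => norm_nonneg _

lemma vsum_le_toReal (hrf : curveLength f a b ≠ ⊤) (P : IntervalPartition a b) :
    vsum f P ≤ (curveLength f a b).toReal := by
  rw [vsum_eq_inscribedSum]
  rw [← ENNReal.ofReal_le_iff_le_toReal hrf]
  exact le_iSup (fun P : IntervalPartition a b => ENNReal.ofReal (inscribedSum f P)) P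

end Sums
section Merge

variable {a b : ℝ}

lemma exists_partition_ofFinset (hab : a < b) (S : Finset ℝ) (ha : a ∈ S) (hb : b ∈ S)
    (hS : ∀ t ∈ S, t ∈ Set.Icc a b) :
    ∃ R : IntervalPartition a b, R.n + 1 = S.card ∧ (∀ k ≤ R.n, R.y k ∈ S) ∧
      ∀ t ∈ S, ∃ k ≤ R.n, R.y k = t := by
  have hk : S.card = (S.card - 1) + 1 :=
    (Nat.succ_pred_eq_of_pos (Finset.card_pos.mpr ⟨a, ha⟩)).symm
  let e := S.orderIsoOfFin hk
  have hmem : ∀ i, ((e i : ℝ)) ∈ S := fun i => (e i).2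
  have hsurj : ∀ t ∈ S, ∃ i, ((e i : ℝ)) = t := fun t ht =>
    ⟨e.symm ⟨t, ht⟩, by simp⟩
  have hmono : ∀ {i j}, i ≤ j → ((e i : ℝ)) ≤ ((e j : ℝ)) := fun hij =>
    Subtype.coe_le_coe.mpr (e.monotone hij)
  have hfirst : ((e 0 : ℝ)) = a := by
    obtain ⟨i₀, hi₀⟩ := hsurj a ha
    exact le_antisymm (hi₀ ▸ hmono (Fin.zero_le i₀)) ((hS _ (hmem 0)).1)
  have hlast : ((e (Fin.last (S.card - 1)) : ℝ)) = b := by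
    obtain ⟨i₀, hi₀⟩ := hsurj b hb
    exact le_antisymm ((hS _ (hmem _)).2) (hi₀ ▸ hmono (Fin.le_last i₀))
  refine ⟨⟨S.card - 1, fun i => (e i : ℝ),
    fun i j hij => Subtype.coe_lt_coe.mpr (e.strictMono hij), hfirst, hlast⟩, hk.symm, ?_, ?_⟩
  · intro k hkn
    rw [IntervalPartition.y_eq _ hkn]
    exact hmem _
  · intro t ht
    obtain ⟨i, hi⟩ := hsurj t ht
    refine ⟨(i : ℕ), Nat.lt_succ_iff.mp i.isLt, ?_⟩
    rw [IntervalPartition.y_eq _ (Nat.lt_succ_iff.mp i.isLt)]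
    simpa [Fin.eta] using hi

/-- Common refinement of two partitions, with grouping index maps. -/
lemma exists_refinement (hab : a < b) (P P' : IntervalPartition a b) :
    ∃ (R : IntervalPartition a b) (s s' : ℕ → ℕ), Monotone s ∧ Monotone s' ∧
      s 0 = 0 ∧ s' 0 = 0 ∧ s P.n = R.n ∧ s' P'.n = R.n ∧
      (∀ i ≤ P.n, R.y (s i) = P.y i) ∧ (∀ i ≤ P'.n, R.y (s' i) = P'.y i) ∧
      R.n ≤ P.n + P'.n + 1 := by
  classical
  set S : Finset ℝ := Finset.image P.y (Finset.range (P.n + 1)) ∪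
      Finset.image P'.y (Finset.range (P'.n + 1)) with hSdef
  have haS : a ∈ S := by
    apply Finset.mem_union_left
    exact Finset.mem_image.mpr ⟨0, Finset.mem_range.mpr (Nat.succ_pos _), P.y_zero⟩
  have hbS : b ∈ S := by
    apply Finset.mem_union_left
    exact Finset.mem_image.mpr ⟨P.n, Finset.mem_range.mpr (Nat.lt_succ_self _), P.y_last⟩
  have hSmem : ∀ t ∈ S, t ∈ Set.Icc a b := by
    intro t ht
    rcases Finset.mem_union.mp ht with h | h <;>
    · obtain ⟨k, _, rfl⟩ := Finset.mem_image.mp h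
      exact IntervalPartition.y_mem _ hab.le _
  obtain ⟨R, hcard, hyS, hSy⟩ := exists_partition_ofFinset hab S haS hbS hSmem
  -- the index map for a partition whose points lie in S
  have key : ∀ Q : IntervalPartition a b,
      Finset.image Q.y (Finset.range (Q.n + 1)) ⊆ S →
      ∃ s : ℕ → ℕ, Monotone s ∧ s 0 = 0 ∧ s Q.n = R.n ∧ ∀ i ≤ Q.n, R.y (s i) = Q.y i := by
    intro Q hQ
    have hex : ∀ i : ℕ, ∃ k ≤ R.n, R.y k = Q.y (min i Q.n) := by
      intro i
      apply hSy
      apply hQ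
      exact Finset.mem_image.mpr ⟨min i Q.n, Finset.mem_range.mpr
        (Nat.lt_succ_of_le (min_le_right _ _)), rfl⟩
    choose s hsle hsy using hex
    have hys : ∀ i ≤ Q.n, R.y (s i) = Q.y i := by
      intro i hi
      rw [hsy i, min_eq_left hi]
    have hmono : Monotone s := by
      intro i j hij
      by_contra hc
      push_neg at hc
      have h1 : R.y (s j) < R.y (s i) := R.y_strict hc (hsle i)
      have h2 : R.y (s i) ≤ R.y (s j) := by
        rw [hsy i, hsy j]
        exact Q.y_mono (min_le_min hij le_rfl)
      linarith
    have h0 : s 0 = 0 := by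
      by_contra hc
      have h1 : R.y 0 < R.y (s 0) := R.y_strict (Nat.pos_of_ne_zero hc) (hsle 0)
      rw [R.y_zero, hys 0 (Nat.zero_le _), Q.y_zero] at h1
      exact lt_irrefl _ h1
    have hn : s Q.n = R.n := by
      rcases lt_or_eq_of_le (hsle Q.n) with hc | hc
      · exfalso
        have h1 : R.y (s Q.n) < R.y R.n := R.y_strict hc le_rfl
        rw [R.y_last, hys Q.n le_rfl, Q.y_last] at h1
        exact lt_irrefl _ h1
      · exact hc
    exact ⟨s, hmono, h0, hn, hys⟩
  obtain ⟨s, hs1, hs2, hs3, hs4⟩ := key P Finset.subset_union_left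
  obtain ⟨s', hs1', hs2', hs3', hs4'⟩ := key P' Finset.subset_union_right
  refine ⟨R, s, s', hs1, hs1', hs2, hs2', hs3, hs3', hs4, hs4', ?_⟩
  have h1 : S.card ≤ (P.n + 1) + (P'.n + 1) := by
    refine le_trans (Finset.card_union_le _ _) ?_
    exact Nat.add_le_add (le_trans (Finset.card_image_le) (by simp))
      (le_trans (Finset.card_image_le) (by simp))
  omega

end Merge
section Integrand

variable {M : ℕ} {F : EuclideanSpace ℝ (Fin M) → EuclideanSpace ℝ (Fin M) → ℝ}

lemma F_zero (hF : IsParametricIntegrand F) (x : EuclideanSpace ℝ (Fin M)) : F x 0 = 0 := by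
  have h := hF.2 0 le_rfl x 0
  simpa using h

lemma F_eq_norm_smul (hF : IsParametricIntegrand F) (x t : EuclideanSpace ℝ (Fin M)) (ht : t ≠ 0) :
    F x t = ‖t‖ * F x (‖t‖⁻¹ • t) := by
  have h := hF.2 ‖t‖ (norm_nonneg t) x (‖t‖⁻¹ • t)
  rwa [smul_inv_smul₀ (norm_ne_zero_iff.mpr ht)] at h

lemma norm_unit_le (t : EuclideanSpace ℝ (Fin M)) : ‖(‖t‖⁻¹ • t)‖ ≤ 1 := by
  rcases eq_or_ne t 0 with rfl | ht
  · simp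
  · rw [norm_smul, norm_inv, norm_norm, inv_mul_cancel₀ (norm_ne_zero_iff.mpr ht)]

variable {X : Set (EuclideanSpace ℝ (Fin M))}

lemma exists_F_bound (hF : IsParametricIntegrand F) (hX : IsCompact X) : ∃ m : ℝ, 0 ≤ m ∧ ∀ x ∈ X, ∀ t, |F x t| ≤ m * ‖t‖ := by
  have hK : IsCompact (X ×ˢ Metric.closedBall (0 : EuclideanSpace ℝ (Fin M)) 1) :=
    hX.prod (isCompact_closedBall _ _)
  obtain ⟨C, hC⟩ := hK.exists_bound_of_continuousOn hF.1.continuousOn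
  refine ⟨max C 0, le_max_right _ _, ?_⟩
  intro x hx t
  rcases eq_or_ne t 0 with rfl | ht
  · rw [F_zero hF]; simp
  · rw [F_eq_norm_smul hF x t ht, abs_mul, abs_norm]
    have hu : (x, ‖t‖⁻¹ • t) ∈ X ×ˢ Metric.closedBall (0 : EuclideanSpace ℝ (Fin M)) 1 := by
      refine ⟨hx, ?_⟩
      rw [Metric.mem_closedBall, dist_zero_right]
      exact norm_unit_le t
    have := hC _ hu
    rw [mul_comm]
    exact mul_le_mul (le_trans this (le_max_left _ _)) le_rfl (norm_nonneg _)
      (le_max_right _ _)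

lemma exists_F_modulus (hF : IsParametricIntegrand F) (hX : IsCompact X) {ε : ℝ} (hε : 0 < ε) :
    ∃ η > (0:ℝ), ∀ x ∈ X, ∀ x' ∈ X, ∀ u u' : EuclideanSpace ℝ (Fin M),
      ‖u‖ ≤ 1 → ‖u'‖ ≤ 1 → ‖x - x'‖ ≤ η → ‖u - u'‖ ≤ η → |F x u - F x' u'| ≤ ε := by
  have hK : IsCompact (X ×ˢ Metric.closedBall (0 : EuclideanSpace ℝ (Fin M)) 1) :=
    hX.prod (isCompact_closedBall _ _)
  have huc := hK.uniformContinuousOn_of_continuous hF.1.continuousOn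
  rw [Metric.uniformContinuousOn_iff] at huc
  obtain ⟨δ, hδ, hδ'⟩ := huc ε hε
  refine ⟨δ / 2, by linarith, ?_⟩
  intro x hx x' hx' u u' hu hu' hxx' huu'
  have h1 : (x, u) ∈ X ×ˢ Metric.closedBall (0 : EuclideanSpace ℝ (Fin M)) 1 :=
    ⟨hx, by rwa [Metric.mem_closedBall, dist_zero_right]⟩
  have h2 : (x', u') ∈ X ×ˢ Metric.closedBall (0 : EuclideanSpace ℝ (Fin M)) 1 :=
    ⟨hx', by rwa [Metric.mem_closedBall, dist_zero_right]⟩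
  have hd : dist (x, u) (x', u') < δ := by
    rw [Prod.dist_eq]
    apply max_lt <;> rw [dist_eq_norm] <;> linarith
  have := hδ' _ h1 _ h2 hd
  rw [Real.dist_eq] at this
  exact this.le

lemma F_diff_x (hF : IsParametricIntegrand F) {η ε₁ : ℝ}
    (hmod : ∀ x ∈ X, ∀ x' ∈ X, ∀ u u' : EuclideanSpace ℝ (Fin M),
      ‖u‖ ≤ 1 → ‖u'‖ ≤ 1 → ‖x - x'‖ ≤ η → ‖u - u'‖ ≤ η → |F x u - F x' u'| ≤ ε₁)
    (hη : 0 < η) {x x' : EuclideanSpace ℝ (Fin M)} (hx : x ∈ X) (hx' : x' ∈ X)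
    (hxx' : ‖x - x'‖ ≤ η) (t : EuclideanSpace ℝ (Fin M)) :
    |F x t - F x' t| ≤ ε₁ * ‖t‖ := by
  rcases eq_or_ne t 0 with rfl | ht
  · rw [F_zero hF, F_zero hF]; simp
  · rw [F_eq_norm_smul hF x t ht, F_eq_norm_smul hF x' t ht, ← mul_sub, abs_mul, abs_norm,
      mul_comm ε₁]
    apply mul_le_mul_of_nonneg_left _ (norm_nonneg t)
    exact hmod x hx x' hx' _ _ (norm_unit_le t) (norm_unit_le t) hxx' (by simp [hη.le])

end Integrand

lemma dist_to_proj_le {M : ℕ} (v w : EuclideanSpace ℝ (Fin M)) (hw : ‖w‖ ≤ 1) :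
    ‖v - ‖v‖ • w‖ ≤ Real.sqrt (2 * ‖v‖ * (‖v‖ - (inner ℝ w v : ℝ))) := by
  have hinner : (inner ℝ w v : ℝ) ≤ ‖w‖ * ‖v‖ := real_inner_le_norm _ _
  have hc : (0:ℝ) ≤ ‖v‖ - (inner ℝ w v : ℝ) := by
    nlinarith [norm_nonneg v, norm_nonneg w, mul_le_mul_of_nonneg_right hw (norm_nonneg v)]
  rw [Real.le_sqrt (norm_nonneg _) (mul_nonneg (by positivity) hc)]
  have hexp := norm_sub_sq_real v (‖v‖ • w)
  have h1 : (inner ℝ v (‖v‖ • w) : ℝ) = ‖v‖ * (inner ℝ w v : ℝ) := by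
    rw [real_inner_smul_right, real_inner_comm]
  have hw2 : ‖w‖ ^ 2 ≤ 1 := by nlinarith [norm_nonneg w]
  have h2 : ‖(‖v‖ • w)‖ ^ 2 ≤ ‖v‖ ^ 2 := by
    rw [norm_smul, norm_norm, mul_pow]
    nlinarith [sq_nonneg ‖v‖, mul_le_mul_of_nonneg_left hw2 (sq_nonneg ‖v‖)]
  nlinarith [hexp, h1, h2]

lemma F_modulus_on {M : ℕ} {F : EuclideanSpace ℝ (Fin M) → EuclideanSpace ℝ (Fin M) → ℝ}
    (hF : IsParametricIntegrand F)
    {K : Set (EuclideanSpace ℝ (Fin M) × EuclideanSpace ℝ (Fin M))} (hK : IsCompact K)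
    {ε : ℝ} (hε : 0 < ε) :
    ∃ η > (0:ℝ), ∀ p ∈ K, ∀ q ∈ K, dist p q ≤ η → |F p.1 p.2 - F q.1 q.2| ≤ ε := by
  have huc := hK.uniformContinuousOn_of_continuous hF.1.continuousOn
  rw [Metric.uniformContinuousOn_iff] at huc
  obtain ⟨δ, hδ, hδ'⟩ := huc ε hε
  refine ⟨δ / 2, by linarith, ?_⟩
  intro p hp q hq hpq
  have := hδ' p hp q hq (lt_of_le_of_lt hpq (by linarith))
  rw [Real.dist_eq] at this
  exact this.le
section KeyEstimate

variable {M : ℕ} {f : ℝ → EuclideanSpace ℝ (Fin M)} {a b : ℝ}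
  {F : EuclideanSpace ℝ (Fin M) → EuclideanSpace ℝ (Fin M) → ℝ}

set_option maxHeartbeats 2000000 in
/-- The key estimate: a Riemann sum over a "good" tagged partition is close to the
Riemann sum over any refinement of it. -/
lemma key_estimate (hab : a < b) (hcf : ContinuousOn f (Set.Icc a b))
    (hrf : curveLength f a b ≠ ⊤) (hF : IsParametricIntegrand F) {ε : ℝ} (hε : 0 < ε) :
    ∃ δ > (0:ℝ), ∀ P : IntervalPartition a b, ∀ τ : ℕ → ℝ,
      (∀ j < P.n, τ j ∈ Set.Icc (P.y j) (P.y (j + 1))) →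
      (∀ j < P.n, ∀ s' ∈ Set.Icc (P.y j) (P.y (j + 1)), ∀ t ∈ Set.Icc (P.y j) (P.y (j + 1)),
        ‖f s' - f t‖ ≤ δ) →
      ((curveLength f a b).toReal - δ < vsum f P) →
      ∀ (R : IntervalPartition a b) (s : ℕ → ℕ), Monotone s → s 0 = 0 → s P.n = R.n →
      (∀ i ≤ P.n, R.y (s i) = P.y i) →
      ∀ τ' : ℕ → ℝ, (∀ j < R.n, τ' j ∈ Set.Icc (R.y j) (R.y (j + 1))) →
      |rsum f F P τ - rsum f F R τ'| ≤ ε := by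
  classical
  set ℓ := (curveLength f a b).toReal with hℓdef
  have hℓ0 : 0 ≤ ℓ := ENNReal.toReal_nonneg
  have hX : IsCompact (f '' Set.Icc a b) := (isCompact_Icc).image_of_continuousOn hcf
  obtain ⟨m, hm0, hmB⟩ := exists_F_bound hF hX
  have hε₁ : 0 < ε / (4 * (ℓ + 1)) := by positivity
  set ε₁ := ε / (4 * (ℓ + 1)) with hε₁def
  obtain ⟨η, hη, hmod⟩ := exists_F_modulus hF hX hε₁
  set δ₂ := min (ε / (8 * (m + 1))) ((ε * η) ^ 2 / (256 * (m + 1) ^ 2 * (2 * ℓ + 1)))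
    with hδ₂def
  have hδ₂pos : 0 < δ₂ := lt_min (by positivity) (by positivity)
  refine ⟨min η δ₂, lt_min hη hδ₂pos, ?_⟩
  intro P τ hτ hosc hvs R s hsmono hs0 hsn hsy τ' hτ'
  set δ := min η δ₂ with hδdef
  have hδη : δ ≤ η := min_le_left _ _
  have hδδ₂ : δ ≤ δ₂ := min_le_right _ _
  -- notation
  set Δ : ℕ → EuclideanSpace ℝ (Fin M) := fun i => f (P.y (i + 1)) - f (P.y i) with hΔdef
  set Δ' : ℕ → EuclideanSpace ℝ (Fin M) := fun j => f (R.y (j + 1)) - f (R.y j) with hΔ'def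
  set u : ℕ → EuclideanSpace ℝ (Fin M) :=
    fun i => if h : Δ i = (0:EuclideanSpace ℝ (Fin M)) then 0 else ‖Δ i‖⁻¹ • Δ i with hudef
  have hu_norm : ∀ i, ‖u i‖ ≤ 1 := by
    intro i
    by_cases h : Δ i = 0
    · simp [hudef, h]
    · simp only [hudef, dif_neg h]
      exact norm_unit_le _
  have hu_smul : ∀ i, ‖Δ i‖ • u i = Δ i := by
    intro i
    by_cases h : Δ i = 0
    · simp [hudef, h]
    · simp only [hudef, dif_neg h]
      rw [smul_smul, mul_inv_cancel₀ (norm_ne_zero_iff.mpr h), one_smul]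
  have hu_inner : ∀ i, (inner ℝ (u i) (Δ i) : ℝ) = ‖Δ i‖ := by
    intro i
    by_cases h : Δ i = 0
    · simp [h]
    · simp only [hudef, dif_neg h]
      rw [real_inner_smul_left, real_inner_self_eq_norm_sq]
      field_simp [norm_ne_zero_iff.mpr h]
  -- membership facts
  have hyab : ∀ (Q : IntervalPartition a b) (k : ℕ), Q.y k ∈ Set.Icc a b :=
    fun Q k => Q.y_mem hab.le k
  have hτab : ∀ i < P.n, τ i ∈ Set.Icc a b := by
    intro i hi
    obtain ⟨h1, h2⟩ := hτ i hi
    exact ⟨le_trans (P.first_le_y i) h1, le_trans h2 (P.y_le_last _)⟩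
  have hτ'ab : ∀ j < R.n, τ' j ∈ Set.Icc a b := by
    intro j hj
    obtain ⟨h1, h2⟩ := hτ' j hj
    exact ⟨le_trans (R.first_le_y j) h1, le_trans h2 (R.y_le_last _)⟩
  -- group facts
  have hgrp : ∀ i < P.n, ∀ j ∈ Finset.Ico (s i) (s (i + 1)),
      j < R.n ∧ P.y i ≤ R.y j ∧ R.y (j + 1) ≤ P.y (i + 1) := by
    intro i hi j hj
    obtain ⟨hj1, hj2⟩ := Finset.mem_Ico.mp hj
    have hi1 : i + 1 ≤ P.n := Nat.succ_le_of_lt hi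
    have hjR : j < R.n := lt_of_lt_of_le hj2 (by rw [← hsn]; exact hsmono hi1)
    refine ⟨hjR, ?_, ?_⟩
    · rw [← hsy i hi.le]; exact R.y_mono hj1
    · rw [← hsy (i + 1) hi1]; exact R.y_mono hj2
  have htel : ∀ i < P.n, ∑ j ∈ Finset.Ico (s i) (s (i + 1)), Δ' j = Δ i := by
    intro i hi
    have h : ∑ j ∈ Finset.Ico (s i) (s (i + 1)), Δ' j
        = f (R.y (s (i + 1))) - f (R.y (s i)) :=
      telescope_Ico (fun j => f (R.y j)) (hsmono (Nat.le_succ i))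
    rw [h, hsy (i + 1) (Nat.succ_le_of_lt hi), hsy i hi.le]
  set lam : ℕ → ℝ := fun i => ∑ j ∈ Finset.Ico (s i) (s (i + 1)), ‖Δ' j‖ with hlamdef
  have hlam_nonneg : ∀ i, 0 ≤ lam i := fun i => Finset.sum_nonneg fun _ _ => norm_nonneg _
  have he_nonneg : ∀ i < P.n, ‖Δ i‖ ≤ lam i := by
    intro i hi
    rw [← htel i hi]
    exact norm_sum_le _ _
  have hVR : ∑ i ∈ Finset.range P.n, lam i = vsum f R := by
    rw [hlamdef]
    simp only []
    rw [grouped_sum s hsmono (fun j => ‖Δ' j‖) P.n, hs0, hsn, ← Finset.range_eq_Ico]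
    rfl
  have hVRl : vsum f R ≤ ℓ := vsum_le_toReal f hrf R
  have hVP : ∑ i ∈ Finset.range P.n, ‖Δ i‖ = vsum f P := rfl
  set E := vsum f R - vsum f P with hEdef
  have hE0 : 0 ≤ E := by
    rw [hEdef, ← hVR, ← hVP, ← Finset.sum_sub_distrib]
    exact Finset.sum_nonneg fun i hi => sub_nonneg.mpr (he_nonneg i (Finset.mem_range.mp hi))
  have hEδ₂ : E ≤ δ₂ := by
    have h1 : vsum f P ≤ ℓ := vsum_le_toReal f hrf P
    rw [hEdef]
    have h2 : ℓ - δ < vsum f P := hvs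
    linarith [hVRl]
  -- the inner c and d quantities
  set c : ℕ → ℕ → ℝ := fun i j => ‖Δ' j‖ - (inner ℝ (u i) (Δ' j) : ℝ) with hcdef
  have hc_nonneg : ∀ i j, 0 ≤ c i j := by
    intro i j
    have h1 : (inner ℝ (u i) (Δ' j) : ℝ) ≤ ‖u i‖ * ‖Δ' j‖ := real_inner_le_norm _ _
    have h2 : ‖u i‖ * ‖Δ' j‖ ≤ 1 * ‖Δ' j‖ :=
      mul_le_mul_of_nonneg_right (hu_norm i) (norm_nonneg _)
    simp only [hcdef]
    nlinarith [norm_nonneg (Δ' j)]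
  set dd : ℕ → ℕ → ℝ := fun i j => ‖Δ' j - ‖Δ' j‖ • u i‖ with hdddef
  have hd_sqrt : ∀ i j, dd i j ≤ Real.sqrt (2 * ‖Δ' j‖ * c i j) := fun i j =>
    dist_to_proj_le (Δ' j) (u i) (hu_norm i)
  -- per (i,j) estimate for the direction change
  have hT : ∀ i < P.n, ∀ j ∈ Finset.Ico (s i) (s (i + 1)),
      |F (f (τ i)) (Δ' j) - F (f (τ i)) (‖Δ' j‖ • u i)| ≤
        ε₁ * ‖Δ' j‖ + (2 * m / η) * dd i j := by
    intro i hi j hj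
    have hxi : f (τ i) ∈ f '' Set.Icc a b := Set.mem_image_of_mem f (hτab i hi)
    rcases eq_or_ne (Δ' j) 0 with hz | hz
    · rw [hz]
      simp only [norm_zero, zero_smul, sub_zero]
      rw [F_zero hF, sub_self, abs_zero]
      have : dd i j = 0 := by simp [hdddef, hz]
      rw [this]
      positivity
    · set uj := ‖Δ' j‖⁻¹ • Δ' j with hujdef
      have hnz : ‖Δ' j‖ ≠ 0 := norm_ne_zero_iff.mpr hz
      have hpos : 0 < ‖Δ' j‖ := norm_pos_iff.mpr hz
      have e1 : F (f (τ i)) (Δ' j) = ‖Δ' j‖ * F (f (τ i)) uj := F_eq_norm_smul hF _ _ hz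
      have e2 : F (f (τ i)) (‖Δ' j‖ • u i) = ‖Δ' j‖ * F (f (τ i)) (u i) :=
        hF.2 _ (norm_nonneg _) _ _
      rw [e1, e2, ← mul_sub, abs_mul, abs_norm]
      have hduj : dd i j = ‖Δ' j‖ * ‖uj - u i‖ := by
        rw [hdddef, hujdef]
        simp only []
        rw [← norm_smul_of_nonneg (norm_nonneg (Δ' j)), smul_sub, smul_smul,
          mul_inv_cancel₀ hnz, one_smul]
      by_cases hcase : ‖uj - u i‖ ≤ η
      · have := hmod (f (τ i)) hxi (f (τ i)) hxi uj (u i) (norm_unit_le _) (hu_norm i)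
          (by simp [hη.le]) hcase
        have h3 : ‖Δ' j‖ * |F (f (τ i)) uj - F (f (τ i)) (u i)| ≤ ‖Δ' j‖ * ε₁ :=
          mul_le_mul_of_nonneg_left this (norm_nonneg _)
        calc ‖Δ' j‖ * |F (f (τ i)) uj - F (f (τ i)) (u i)| ≤ ‖Δ' j‖ * ε₁ := h3
          _ = ε₁ * ‖Δ' j‖ := mul_comm _ _
          _ ≤ ε₁ * ‖Δ' j‖ + (2 * m / η) * dd i j := by
              have : 0 ≤ (2 * m / η) * dd i j := mul_nonneg (by positivity) (norm_nonneg _)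
              linarith
      · push_neg at hcase
        have hb1 : |F (f (τ i)) uj| ≤ m := by
          have := hmB _ hxi uj
          calc |F (f (τ i)) uj| ≤ m * ‖uj‖ := this
            _ ≤ m * 1 := mul_le_mul_of_nonneg_left (norm_unit_le _) hm0
            _ = m := mul_one m
        have hb2 : |F (f (τ i)) (u i)| ≤ m := by
          have := hmB _ hxi (u i)
          calc |F (f (τ i)) (u i)| ≤ m * ‖u i‖ := this
            _ ≤ m * 1 := mul_le_mul_of_nonneg_left (hu_norm i) hm0
            _ = m := mul_one m
        have h4 : |F (f (τ i)) uj - F (f (τ i)) (u i)| ≤ 2 * m := by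
          calc |F (f (τ i)) uj - F (f (τ i)) (u i)| ≤
              |F (f (τ i)) uj| + |F (f (τ i)) (u i)| := abs_sub _ _
            _ ≤ 2 * m := by linarith
        have h5 : ‖Δ' j‖ * |F (f (τ i)) uj - F (f (τ i)) (u i)| ≤ (2 * m / η) * dd i j := by
          rw [hduj, div_mul_eq_mul_div, le_div_iff₀ hη]
          nlinarith [norm_nonneg (Δ' j), abs_nonneg (F (f (τ i)) uj - F (f (τ i)) (u i)),
            hm0, h4, hcase, hη,
            mul_le_mul_of_nonneg_left h4 (norm_nonneg (Δ' j)),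
            mul_le_mul_of_nonneg_left hcase.le (mul_nonneg (norm_nonneg (Δ' j)) (by linarith : (0:ℝ) ≤ 2 * m))]
        calc ‖Δ' j‖ * |F (f (τ i)) uj - F (f (τ i)) (u i)| ≤ (2 * m / η) * dd i j := h5
          _ ≤ ε₁ * ‖Δ' j‖ + (2 * m / η) * dd i j := by
              have : 0 ≤ ε₁ * ‖Δ' j‖ := by positivity
              linarith
  -- per-interval estimate
  have hFu_bound : ∀ i < P.n, |F (f (τ i)) (u i)| ≤ m := by
    intro i hi
    have hxi : f (τ i) ∈ f '' Set.Icc a b := Set.mem_image_of_mem f (hτab i hi)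
    calc |F (f (τ i)) (u i)| ≤ m * ‖u i‖ := hmB _ hxi (u i)
      _ ≤ m * 1 := mul_le_mul_of_nonneg_left (hu_norm i) hm0
      _ = m := mul_one m
  have hper : ∀ i ∈ Finset.range P.n,
      |F (f (τ i)) (Δ i) - ∑ j ∈ Finset.Ico (s i) (s (i + 1)), F (f (τ' j)) (Δ' j)|
        ≤ 2 * ε₁ * lam i + (2 * m / η) * (∑ j ∈ Finset.Ico (s i) (s (i + 1)), dd i j)
          + m * (lam i - ‖Δ i‖) := by
    intro i hiR
    have hi := Finset.mem_range.mp hiR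
    have hxi : f (τ i) ∈ f '' Set.Icc a b := Set.mem_image_of_mem f (hτab i hi)
    have hA : |∑ j ∈ Finset.Ico (s i) (s (i + 1)), F (f (τ i)) (Δ' j)
        - ∑ j ∈ Finset.Ico (s i) (s (i + 1)), F (f (τ' j)) (Δ' j)| ≤ ε₁ * lam i := by
      rw [← Finset.sum_sub_distrib]
      refine le_trans (Finset.abs_sum_le_sum_abs _ _) ?_
      have : ε₁ * lam i = ∑ j ∈ Finset.Ico (s i) (s (i + 1)), ε₁ * ‖Δ' j‖ := by
        rw [hlamdef]; simp only []; rw [Finset.mul_sum]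
      rw [this]
      apply Finset.sum_le_sum
      intro j hj
      obtain ⟨hjR, hy1, hy2⟩ := hgrp i hi j hj
      have hτ'mem : τ' j ∈ Set.Icc (P.y i) (P.y (i + 1)) :=
        ⟨le_trans hy1 (hτ' j hjR).1, le_trans (hτ' j hjR).2 hy2⟩
      have hclose : ‖f (τ i) - f (τ' j)‖ ≤ η :=
        le_trans (hosc i hi _ (hτ i hi) _ hτ'mem) hδη
      exact F_diff_x hF hmod hη hxi (Set.mem_image_of_mem f (hτ'ab j hjR)) hclose (Δ' j)
    have hsum_smul : ∑ j ∈ Finset.Ico (s i) (s (i + 1)), F (f (τ i)) (‖Δ' j‖ • u i)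
        = lam i * F (f (τ i)) (u i) := by
      rw [Finset.sum_congr rfl (fun j _ => hF.2 ‖Δ' j‖ (norm_nonneg _) (f (τ i)) (u i)),
        hlamdef]
      simp only []
      rw [Finset.sum_mul]
    have hFΔ : F (f (τ i)) (Δ i) = ‖Δ i‖ * F (f (τ i)) (u i) := by
      conv_lhs => rw [← hu_smul i]
      exact hF.2 _ (norm_nonneg _) _ _
    have hB : |∑ j ∈ Finset.Ico (s i) (s (i + 1)), F (f (τ i)) (Δ' j) - F (f (τ i)) (Δ i)|
        ≤ ε₁ * lam i + (2 * m / η) * (∑ j ∈ Finset.Ico (s i) (s (i + 1)), dd i j)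
          + m * (lam i - ‖Δ i‖) := by
      have hsplit : ∑ j ∈ Finset.Ico (s i) (s (i + 1)), F (f (τ i)) (Δ' j) - F (f (τ i)) (Δ i)
          = (∑ j ∈ Finset.Ico (s i) (s (i + 1)),
              (F (f (τ i)) (Δ' j) - F (f (τ i)) (‖Δ' j‖ • u i)))
            + (lam i - ‖Δ i‖) * F (f (τ i)) (u i) := by
        rw [Finset.sum_sub_distrib, hsum_smul, hFΔ]; ring
      rw [hsplit]
      refine le_trans (abs_add_le _ _) ?_
      have hB1 : |∑ j ∈ Finset.Ico (s i) (s (i + 1)),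
          (F (f (τ i)) (Δ' j) - F (f (τ i)) (‖Δ' j‖ • u i))|
          ≤ ε₁ * lam i + (2 * m / η) * (∑ j ∈ Finset.Ico (s i) (s (i + 1)), dd i j) := by
        refine le_trans (Finset.abs_sum_le_sum_abs _ _) ?_
        have heq : ε₁ * lam i + (2 * m / η) * (∑ j ∈ Finset.Ico (s i) (s (i + 1)), dd i j)
            = ∑ j ∈ Finset.Ico (s i) (s (i + 1)), (ε₁ * ‖Δ' j‖ + (2 * m / η) * dd i j) := by
          rw [Finset.sum_add_distrib, ← Finset.mul_sum, ← Finset.mul_sum, hlamdef]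
        rw [heq]
        exact Finset.sum_le_sum (fun j hj => hT i hi j hj)
      have hB2 : |(lam i - ‖Δ i‖) * F (f (τ i)) (u i)| ≤ m * (lam i - ‖Δ i‖) := by
        rw [abs_mul, abs_of_nonneg (sub_nonneg.mpr (he_nonneg i hi))]
        exact le_trans (mul_le_mul_of_nonneg_left (hFu_bound i hi)
          (sub_nonneg.mpr (he_nonneg i hi))) (le_of_eq (mul_comm _ _))
      linarith
    calc |F (f (τ i)) (Δ i) - ∑ j ∈ Finset.Ico (s i) (s (i + 1)), F (f (τ' j)) (Δ' j)|
        ≤ |F (f (τ i)) (Δ i) - ∑ j ∈ Finset.Ico (s i) (s (i + 1)), F (f (τ i)) (Δ' j)|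
          + |∑ j ∈ Finset.Ico (s i) (s (i + 1)), F (f (τ i)) (Δ' j)
            - ∑ j ∈ Finset.Ico (s i) (s (i + 1)), F (f (τ' j)) (Δ' j)| := abs_sub_le _ _ _
      _ ≤ (ε₁ * lam i + (2 * m / η) * (∑ j ∈ Finset.Ico (s i) (s (i + 1)), dd i j)
            + m * (lam i - ‖Δ i‖)) + ε₁ * lam i := by
          refine add_le_add ?_ hA
          rw [abs_sub_comm]
          exact hB
      _ = 2 * ε₁ * lam i + (2 * m / η) * (∑ j ∈ Finset.Ico (s i) (s (i + 1)), dd i j)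
            + m * (lam i - ‖Δ i‖) := by ring
  -- global sums
  set D := ∑ i ∈ Finset.range P.n, ∑ j ∈ Finset.Ico (s i) (s (i + 1)), dd i j with hDdef
  have hD0 : 0 ≤ D :=
    Finset.sum_nonneg fun i _ => Finset.sum_nonneg fun j _ => norm_nonneg _
  have hgrpR : rsum f F R τ' = ∑ i ∈ Finset.range P.n,
      ∑ j ∈ Finset.Ico (s i) (s (i + 1)), F (f (τ' j)) (Δ' j) := by
    rw [grouped_sum s hsmono (fun j => F (f (τ' j)) (Δ' j)) P.n, hs0, hsn,
      ← Finset.range_eq_Ico]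
    rfl
  have hmain : |rsum f F P τ - rsum f F R τ'|
      ≤ 2 * ε₁ * vsum f R + (2 * m / η) * D + m * E := by
    rw [hgrpR]
    have h1 : rsum f F P τ = ∑ i ∈ Finset.range P.n, F (f (τ i)) (Δ i) := rfl
    rw [h1, ← Finset.sum_sub_distrib]
    refine le_trans (Finset.abs_sum_le_sum_abs _ _) ?_
    refine le_trans (Finset.sum_le_sum hper) ?_
    rw [Finset.sum_add_distrib, Finset.sum_add_distrib, ← Finset.mul_sum, ← Finset.mul_sum,
      hVR, ← Finset.mul_sum, Finset.sum_sub_distrib, hVR, hVP]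
  -- Cauchy–Schwarz bound on D
  have hcsum : ∀ i < P.n, ∑ j ∈ Finset.Ico (s i) (s (i + 1)), c i j = lam i - ‖Δ i‖ := by
    intro i hi
    have h1 : ∑ j ∈ Finset.Ico (s i) (s (i + 1)), (inner ℝ (u i) (Δ' j) : ℝ)
        = (inner ℝ (u i) (Δ i) : ℝ) := by
      rw [← inner_sum, htel i hi]
    simp only [hcdef]
    rw [Finset.sum_sub_distrib, h1, hu_inner i, hlamdef]
  have hDbound : D ≤ Real.sqrt (2 * ℓ) * Real.sqrt δ₂ := by
    have h1 : D ≤ ∑ i ∈ Finset.range P.n, ∑ j ∈ Finset.Ico (s i) (s (i + 1)),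
        Real.sqrt ((2 * ‖Δ' j‖) * c i j) := by
      refine Finset.sum_le_sum fun i _ => Finset.sum_le_sum fun j _ => ?_
      have := hd_sqrt i j
      rwa [show 2 * ‖Δ' j‖ * c i j = (2 * ‖Δ' j‖) * c i j from by ring] at this
    have h2 : ∑ i ∈ Finset.range P.n, ∑ j ∈ Finset.Ico (s i) (s (i + 1)),
        Real.sqrt ((2 * ‖Δ' j‖) * c i j)
        ≤ Real.sqrt (2 * vsum f R) * Real.sqrt E := by
      rw [Finset.sum_sigma' (Finset.range P.n) (fun i => Finset.Ico (s i) (s (i + 1)))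
        (fun i j => Real.sqrt ((2 * ‖Δ' j‖) * c i j))]
      have h3 := sqrt_cauchy_schwarz
        ((Finset.range P.n).sigma (fun i => Finset.Ico (s i) (s (i + 1))))
        (fun p => 2 * ‖Δ' p.2‖) (fun p => c p.1 p.2)
        (fun p _ => by positivity) (fun p _ => hc_nonneg _ _)
      have h4 : ∑ p ∈ (Finset.range P.n).sigma (fun i => Finset.Ico (s i) (s (i + 1))),
          2 * ‖Δ' p.2‖ = 2 * vsum f R := by
        rw [← Finset.sum_sigma' (Finset.range P.n) (fun i => Finset.Ico (s i) (s (i + 1)))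
          (fun i j => 2 * ‖Δ' j‖)]
        rw [grouped_sum s hsmono (fun j => 2 * ‖Δ' j‖) P.n, hs0, hsn, ← Finset.range_eq_Ico,
          ← Finset.mul_sum]
        rfl
      have h5 : ∑ p ∈ (Finset.range P.n).sigma (fun i => Finset.Ico (s i) (s (i + 1))),
          c p.1 p.2 = E := by
        rw [← Finset.sum_sigma' (Finset.range P.n) (fun i => Finset.Ico (s i) (s (i + 1)))
          (fun i j => c i j)]
        rw [Finset.sum_congr rfl (fun i hi => hcsum i (Finset.mem_range.mp hi)),
          Finset.sum_sub_distrib, hVR, hVP]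
      rw [h4, h5] at h3
      exact h3
    refine le_trans h1 (le_trans h2 ?_)
    have hs1 : Real.sqrt (2 * vsum f R) ≤ Real.sqrt (2 * ℓ) :=
      Real.sqrt_le_sqrt (by linarith)
    have hs2 : Real.sqrt E ≤ Real.sqrt δ₂ := Real.sqrt_le_sqrt hEδ₂
    exact mul_le_mul hs1 hs2 (Real.sqrt_nonneg _) (Real.sqrt_nonneg _)
  -- numeric conclusion
  have hε₁eq : ε₁ * (4 * (ℓ + 1)) = ε := by
    rw [hε₁def]; field_simp
  have t1 : 2 * ε₁ * vsum f R ≤ ε / 2 := by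
    nlinarith [mul_nonneg hε₁.le (sub_nonneg.mpr hVRl), hε₁.le, vsum_nonneg f R, hℓ0]
  have hδ₂a : δ₂ * (8 * (m + 1)) ≤ ε := by
    have := min_le_left (ε / (8 * (m + 1))) ((ε * η) ^ 2 / (256 * (m + 1) ^ 2 * (2 * ℓ + 1)))
    rw [← hδ₂def] at this
    exact (le_div_iff₀ (by positivity)).mp this
  have t2 : m * E ≤ ε / 8 := by
    nlinarith [mul_le_mul_of_nonneg_left hEδ₂ hm0, hE0, hm0, hδ₂pos.le,
      mul_le_mul_of_nonneg_left hδ₂a (by linarith : (0:ℝ) ≤ 1)]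
  have hδ₂b : δ₂ * (256 * (m + 1) ^ 2 * (2 * ℓ + 1)) ≤ (ε * η) ^ 2 := by
    have := min_le_right (ε / (8 * (m + 1))) ((ε * η) ^ 2 / (256 * (m + 1) ^ 2 * (2 * ℓ + 1)))
    rw [← hδ₂def] at this
    exact (le_div_iff₀ (by positivity)).mp this
  have t3 : (2 * m / η) * D ≤ ε / 8 := by
    have hQ0 : 0 ≤ (2 * m / η) * (Real.sqrt (2 * ℓ) * Real.sqrt δ₂) := by positivity
    have hQsq : ((2 * m / η) * (Real.sqrt (2 * ℓ) * Real.sqrt δ₂)) ^ 2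
        = (2 * m / η) ^ 2 * ((2 * ℓ) * δ₂) := by
      rw [mul_pow, mul_pow, Real.sq_sqrt (by linarith), Real.sq_sqrt hδ₂pos.le]
    have hsq : ((2 * m / η) * (Real.sqrt (2 * ℓ) * Real.sqrt δ₂)) ^ 2 ≤ (ε / 8) ^ 2 := by
      rw [hQsq, div_pow, div_mul_eq_mul_div, div_le_iff₀ (by positivity : (0:ℝ) < η ^ 2)]
      have hcoef : 2 * m ^ 2 * ℓ ≤ (m + 1) ^ 2 * (2 * ℓ + 1) := by
        nlinarith [sq_nonneg m, hm0, hℓ0]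
      have h6 : (2 * m ^ 2 * ℓ) * δ₂ ≤ ((m + 1) ^ 2 * (2 * ℓ + 1)) * δ₂ :=
        mul_le_mul_of_nonneg_right hcoef hδ₂pos.le
      nlinarith [h6, hδ₂b, hδ₂pos.le]
    have hQle : (2 * m / η) * (Real.sqrt (2 * ℓ) * Real.sqrt δ₂) ≤ ε / 8 := by
      have := Real.sqrt_le_sqrt hsq
      rwa [Real.sqrt_sq hQ0, Real.sqrt_sq (by positivity)] at this
    have hMD : (2 * m / η) * D ≤ (2 * m / η) * (Real.sqrt (2 * ℓ) * Real.sqrt δ₂) :=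
      mul_le_mul_of_nonneg_left hDbound (by positivity)
    linarith
  linarith [hmain, t1, t2, t3]

end KeyEstimate
section Existence

variable {M : ℕ} {f : ℝ → EuclideanSpace ℝ (Fin M)} {a b : ℝ}
  {F : EuclideanSpace ℝ (Fin M) → EuclideanSpace ℝ (Fin M) → ℝ}

lemma vsum_refine_le (f : ℝ → EuclideanSpace ℝ (Fin M)) (R Q : IntervalPartition a b) (s : ℕ → ℕ)
    (hsmono : Monotone s) (hs0 : s 0 = 0) (hsn : s Q.n = R.n)
    (hsy : ∀ i ≤ Q.n, R.y (s i) = Q.y i) : vsum f Q ≤ vsum f R := by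
  have hgrp : vsum f R = ∑ i ∈ Finset.range Q.n,
      ∑ j ∈ Finset.Ico (s i) (s (i + 1)), ‖f (R.y (j + 1)) - f (R.y j)‖ := by
    rw [grouped_sum s hsmono (fun j => ‖f (R.y (j + 1)) - f (R.y j)‖) Q.n, hs0, hsn,
      ← Finset.range_eq_Ico]
    rfl
  rw [hgrp]
  apply Finset.sum_le_sum
  intro i hi
  have hiQ := Finset.mem_range.mp hi
  have htel : ∑ j ∈ Finset.Ico (s i) (s (i + 1)), (f (R.y (j + 1)) - f (R.y j))
      = f (Q.y (i + 1)) - f (Q.y i) := by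
    have h : ∑ j ∈ Finset.Ico (s i) (s (i + 1)), (f (R.y (j + 1)) - f (R.y j))
        = f (R.y (s (i + 1))) - f (R.y (s i)) :=
      telescope_Ico (fun j => f (R.y j)) (hsmono (Nat.le_succ i))
    rw [h, hsy (i + 1) (Nat.succ_le_of_lt hiQ), hsy i hiQ.le]
  calc ‖f (Q.y (i + 1)) - f (Q.y i)‖
      = ‖∑ j ∈ Finset.Ico (s i) (s (i + 1)), (f (R.y (j + 1)) - f (R.y j))‖ := by rw [htel]
    _ ≤ ∑ j ∈ Finset.Ico (s i) (s (i + 1)), ‖f (R.y (j + 1)) - f (R.y j)‖ := norm_sum_le _ _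

/-- A "good" partition: small oscillation on each subinterval, inscribed sum near the length. -/
def Good (f : ℝ → EuclideanSpace ℝ (Fin M)) (a b : ℝ) (δ : ℝ) (P : IntervalPartition a b) : Prop :=
  (∀ j < P.n, ∀ s ∈ Set.Icc (P.y j) (P.y (j + 1)), ∀ t ∈ Set.Icc (P.y j) (P.y (j + 1)),
    ‖f s - f t‖ ≤ δ) ∧ (curveLength f a b).toReal - δ < vsum f P

lemma Good.mono {δ δ' : ℝ} (h : δ ≤ δ') {P : IntervalPartition a b} (hP : Good f a b δ P) :
    Good f a b δ' P :=
  ⟨fun j hj s hs t ht => le_trans (hP.1 j hj s hs t ht) h, by have := hP.2; linarith⟩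

/-- Partitions of arbitrarily small mesh exist. -/
lemma exists_small_mesh (hab : a < b) {μ : ℝ} (hμ : 0 < μ) :
    ∃ P : IntervalPartition a b, P.mesh < μ := by
  obtain ⟨n, hn⟩ := exists_nat_gt ((b - a) / μ)
  have hn0 : 0 < n := by
    rcases Nat.eq_zero_or_pos n with rfl | h
    · exfalso
      have h1 : 0 < (b - a) / μ := div_pos (by linarith) hμ
      simp only [Nat.cast_zero] at hn
      linarith
    · exact h
  have hg : 0 < (b - a) / n := div_pos (by linarith) (by exact_mod_cast hn0)
  have hgμ : (b - a) / n < μ := by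
    rw [div_lt_iff₀ (by exact_mod_cast hn0)]
    rw [div_lt_iff₀ hμ] at hn
    linarith [hn]
  refine ⟨⟨n, fun i => a + i * ((b - a) / n), ?_, ?_, ?_⟩, ?_⟩
  · intro i j hij
    have : (i : ℝ) < j := by exact_mod_cast hij
    have := mul_lt_mul_of_pos_right this hg
    linarith
  · simp
  · show a + (Fin.last n : ℕ) * ((b - a) / n) = b
    rw [Fin.val_last]
    field_simp
    ring
  · show IntervalPartition.mesh _ < μ
    unfold IntervalPartition.mesh
    have hne : Nonempty (Fin n) := ⟨⟨0, hn0⟩⟩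
    refine lt_of_le_of_lt (ciSup_le fun i => ?_) hgμ
    show a + ((i.succ : ℕ) : ℝ) * ((b - a) / n) - (a + ((i.castSucc : ℕ) : ℝ) * ((b - a) / n))
      ≤ (b - a) / n
    rw [Fin.val_succ, Fin.coe_castSucc]
    push_cast
    ring_nf
    nlinarith [hg]

/-- Small mesh gives small oscillation. -/
lemma mesh_implies_osc (hab : a < b) (hcf : ContinuousOn f (Set.Icc a b)) {θ : ℝ}
    (hθ : 0 < θ) : ∃ μ > (0:ℝ), ∀ P : IntervalPartition a b, P.mesh < μ →
      ∀ j < P.n, ∀ s ∈ Set.Icc (P.y j) (P.y (j + 1)), ∀ t ∈ Set.Icc (P.y j) (P.y (j + 1)),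
        ‖f s - f t‖ ≤ θ := by
  have huc := (isCompact_Icc (a := a) (b := b)).uniformContinuousOn_of_continuous hcf
  rw [Metric.uniformContinuousOn_iff] at huc
  obtain ⟨μ, hμ, hμ'⟩ := huc θ hθ
  refine ⟨μ, hμ, ?_⟩
  intro P hP j hj s hs t ht
  have hsub : Set.Icc (P.y j) (P.y (j + 1)) ⊆ Set.Icc a b := by
    intro z hz
    exact ⟨le_trans (P.first_le_y j) hz.1, le_trans hz.2 (P.y_le_last (j + 1))⟩
  have hdist : dist s t < μ := by
    rw [Real.dist_eq]
    have h1 := P.gap_lt_of_mesh_lt hP hj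
    have h2 : |s - t| ≤ P.y (j + 1) - P.y j := abs_sub_le_iff.mpr
      ⟨by linarith [hs.1, hs.2, ht.1, ht.2], by linarith [hs.1, hs.2, ht.1, ht.2]⟩
    linarith [h2]
  have := hμ' s (hsub hs) t (hsub ht) hdist
  rw [dist_eq_norm] at this
  exact this.le

/-- Small oscillation implies the inscribed sum is near the length. -/
lemma osc_implies_vsum (hab : a < b) (hrf : curveLength f a b ≠ ⊤) {δ : ℝ} (hδ : 0 < δ) :
    ∃ θ > (0:ℝ), ∀ P : IntervalPartition a b,
      (∀ j < P.n, ∀ s ∈ Set.Icc (P.y j) (P.y (j + 1)), ∀ t ∈ Set.Icc (P.y j) (P.y (j + 1)),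
        ‖f s - f t‖ ≤ θ) →
      (curveLength f a b).toReal - δ < vsum f P := by
  set ℓ := (curveLength f a b).toReal with hℓdef
  -- find a partition nearly achieving the length
  have hex : ∃ P₀ : IntervalPartition a b, ℓ - δ / 2 < vsum f P₀ := by
    by_cases hcase : ℓ - δ / 2 < 0
    · obtain ⟨P₁, -⟩ := exists_small_mesh hab one_pos
      exact ⟨P₁, lt_of_lt_of_le hcase (vsum_nonneg f _)⟩
    · push_neg at hcase
      have hlt : ENNReal.ofReal (ℓ - δ / 2) < curveLength f a b := by
        have h1 : curveLength f a b = ENNReal.ofReal ℓ := (ENNReal.ofReal_toReal hrf).symm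
        rw [h1]
        apply ENNReal.ofReal_lt_ofReal_iff_of_nonneg hcase |>.mpr
        have hℓpos : 0 < ℓ := lt_of_le_of_lt hcase (by linarith)
        linarith
      rw [curveLength, lt_iSup_iff] at hlt
      obtain ⟨P₀, hP₀⟩ := hlt
      refine ⟨P₀, ?_⟩
      rw [← vsum_eq_inscribedSum] at hP₀
      exact (ENNReal.ofReal_lt_ofReal_iff_of_nonneg hcase).mp hP₀
  obtain ⟨P₀, hP₀⟩ := hex
  refine ⟨δ / (4 * (P₀.n + 1)), by positivity, ?_⟩
  intro P hosc
  set θ := δ / (4 * (P₀.n + 1)) with hθdef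
  have hθ0 : 0 < θ := by positivity
  obtain ⟨R, s, s', hs1, hs1', hs2, hs2', hs3, hs3', hs4, hs4', hRn⟩ :=
    exists_refinement hab P P₀
  have h1 : vsum f P₀ ≤ vsum f R := vsum_refine_le f R P₀ s' hs1' hs2' hs3' hs4'
  -- vsum f R ≤ vsum f P + 2θ(R.n - P.n)
  have hsstrict : ∀ i < P.n, s i < s (i + 1) := by
    intro i hi
    by_contra hc
    push_neg at hc
    have e1 : R.y (s (i + 1)) = P.y (i + 1) := hs4 _ (Nat.succ_le_of_lt hi)
    have e2 : R.y (s i) = P.y i := hs4 _ hi.le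
    have h2 : R.y (s (i + 1)) ≤ R.y (s i) := R.y_mono hc
    rw [e1, e2] at h2
    exact absurd h2 (not_le.mpr (P.y_strict (Nat.lt_succ_self i) (Nat.succ_le_of_lt hi)))
  have hkey : ∀ i < P.n, ∑ j ∈ Finset.Ico (s i) (s (i + 1)), ‖f (R.y (j + 1)) - f (R.y j)‖
      ≤ ‖f (P.y (i + 1)) - f (P.y i)‖ + 2 * θ * (((s (i + 1) : ℝ)) - s i - 1) := by
    intro i hi
    rcases eq_or_lt_of_le (Nat.succ_le_of_lt (hsstrict i hi)) with hk1 | hk2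
    · -- single interval
      have hk1' : s i + 1 = s (i + 1) := hk1
      have hIco : Finset.Ico (s i) (s (i + 1)) = {s i} := by
        rw [← hk1']
        simp
      rw [hIco, Finset.sum_singleton]
      have e1 : R.y (s i + 1) = P.y (i + 1) := by
        rw [hk1']; exact hs4 _ (Nat.succ_le_of_lt hi)
      have e2 : R.y (s i) = P.y i := hs4 _ hi.le
      rw [e1, e2, ← hk1']
      push_cast
      ring_nf
      nlinarith [hθ0]
    · -- at least two subintervals: each term ≤ θ
      have hterm : ∀ j ∈ Finset.Ico (s i) (s (i + 1)), ‖f (R.y (j + 1)) - f (R.y j)‖ ≤ θ := by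
        intro j hj
        obtain ⟨hj1, hj2⟩ := Finset.mem_Ico.mp hj
        have hy1 : P.y i ≤ R.y j := by
          rw [← hs4 i hi.le]; exact R.y_mono hj1
        have hy2 : R.y (j + 1) ≤ P.y (i + 1) := by
          rw [← hs4 (i + 1) (Nat.succ_le_of_lt hi)]; exact R.y_mono hj2
        exact hosc i hi _ ⟨le_trans hy1 (R.y_mono (Nat.le_succ j)), hy2⟩
          _ ⟨hy1, le_trans (R.y_mono (Nat.le_succ j)) hy2⟩
      have hcard : (Finset.Ico (s i) (s (i + 1))).card = s (i + 1) - s i := Nat.card_Ico _ _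
      have hsum : ∑ j ∈ Finset.Ico (s i) (s (i + 1)), ‖f (R.y (j + 1)) - f (R.y j)‖
          ≤ ((s (i + 1) : ℝ) - s i) * θ := by
        refine le_trans (Finset.sum_le_card_nsmul _ _ θ hterm) ?_
        rw [hcard, nsmul_eq_mul]
        have : ((s (i + 1) - s i : ℕ) : ℝ) = (s (i + 1) : ℝ) - s i := by
          push_cast [Nat.cast_sub (hsstrict i hi).le]
          ring
        rw [this]
      have hk2' : (2:ℝ) ≤ (s (i + 1) : ℝ) - s i := by
        have hn2 : s i + 2 ≤ s (i + 1) := hk2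
        have : ((s i : ℝ)) + 2 ≤ s (i + 1) := by exact_mod_cast hn2
        linarith
      refine le_trans hsum ?_
      nlinarith [norm_nonneg (f (P.y (i + 1)) - f (P.y i)), hθ0, hk2']
  have hgrpR : vsum f R = ∑ i ∈ Finset.range P.n,
      ∑ j ∈ Finset.Ico (s i) (s (i + 1)), ‖f (R.y (j + 1)) - f (R.y j)‖ := by
    rw [grouped_sum s hs1 (fun j => ‖f (R.y (j + 1)) - f (R.y j)‖) P.n, hs2, hs3,
      ← Finset.range_eq_Ico]
    rfl
  have htelk : ∑ i ∈ Finset.range P.n, (((s (i + 1) : ℝ)) - s i) = R.n := by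
    have := Finset.sum_range_sub (fun i => (s i : ℝ)) P.n
    rw [this, hs2, hs3]
    simp
  have h2 : vsum f R ≤ vsum f P + 2 * θ * ((R.n : ℝ) - P.n) := by
    rw [hgrpR]
    have := Finset.sum_le_sum (fun i hi => hkey i (Finset.mem_range.mp hi))
    refine le_trans this ?_
    rw [Finset.sum_add_distrib]
    have e1 : ∑ i ∈ Finset.range P.n, ‖f (P.y (i + 1)) - f (P.y i)‖ = vsum f P := rfl
    have e2 : ∑ i ∈ Finset.range P.n, 2 * θ * (((s (i + 1) : ℝ)) - s i - 1)
        = 2 * θ * ((R.n : ℝ) - P.n) := by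
      rw [← Finset.mul_sum]
      congr 1
      rw [Finset.sum_sub_distrib, htelk]
      simp
    rw [e1, e2]
  have h3 : (R.n : ℝ) - P.n ≤ P₀.n + 1 := by
    have : (R.n : ℝ) ≤ P.n + P₀.n + 1 := by exact_mod_cast hRn
    linarith
  have h4 : 2 * θ * ((R.n : ℝ) - P.n) ≤ 2 * θ * (P₀.n + 1) :=
    mul_le_mul_of_nonneg_left h3 (by positivity)
  have h5 : 2 * θ * ((P₀.n : ℝ) + 1) ≤ δ / 2 := by
    have hN : (0:ℝ) < (P₀.n : ℝ) + 1 := by positivity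
    have h : 2 * (δ / (4 * ((P₀.n : ℝ) + 1))) * ((P₀.n : ℝ) + 1) = δ / 2 := by
      field_simp
      ring
    rw [hθdef, h]
  linarith [h1, h2, hP₀]

end Existence
section Limit

variable {M : ℕ} {f : ℝ → EuclideanSpace ℝ (Fin M)} {a b : ℝ}
  {F : EuclideanSpace ℝ (Fin M) → EuclideanSpace ℝ (Fin M) → ℝ}

/-- Valid tags for a partition. -/
def ValidTags (P : IntervalPartition a b) (τ : ℕ → ℝ) : Prop :=
  ∀ j < P.n, τ j ∈ Set.Icc (P.y j) (P.y (j + 1))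

lemma validTags_y (P : IntervalPartition a b) : ValidTags P P.y :=
  fun j _ => ⟨le_rfl, P.y_mono (Nat.le_succ j)⟩

lemma mesh_good (hab : a < b) (hcf : ContinuousOn f (Set.Icc a b))
    (hrf : curveLength f a b ≠ ⊤) {δ : ℝ} (hδ : 0 < δ) :
    ∃ μ > (0:ℝ), ∀ P : IntervalPartition a b, P.mesh < μ → Good f a b δ P := by
  obtain ⟨θ, hθ, hθ'⟩ := osc_implies_vsum (f := f) hab hrf hδ
  obtain ⟨μ, hμ, hμ'⟩ := mesh_implies_osc hab hcf (lt_min hθ hδ)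
  refine ⟨μ, hμ, fun P hP => ⟨?_, ?_⟩⟩
  · intro j hj s hs t ht
    exact le_trans (hμ' P hP j hj s hs t ht) (min_le_right _ _)
  · exact hθ' P fun j hj s hs t ht => le_trans (hμ' P hP j hj s hs t ht) (min_le_left _ _)

lemma exists_good (hab : a < b) (hcf : ContinuousOn f (Set.Icc a b))
    (hrf : curveLength f a b ≠ ⊤) {δ : ℝ} (hδ : 0 < δ) :
    ∃ P : IntervalPartition a b, Good f a b δ P := by
  obtain ⟨μ, hμ, hμ'⟩ := mesh_good hab hcf hrf hδ
  obtain ⟨P, hP⟩ := exists_small_mesh hab hμ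
  exact ⟨P, hμ' P hP⟩

/-- Existence of a limit value for Riemann sums over good tagged partitions. -/
lemma exists_goodLimit (hab : a < b) (hcf : ContinuousOn f (Set.Icc a b))
    (hrf : curveLength f a b ≠ ⊤) (hF : IsParametricIntegrand F) :
    ∃ L : ℝ, ∀ ε > (0:ℝ), ∃ δ > (0:ℝ), ∀ P : IntervalPartition a b, ∀ τ : ℕ → ℝ,
      ValidTags P τ → Good f a b δ P → |rsum f F P τ - L| ≤ ε := by
  classical
  have hkeyE : ∀ k : ℕ, ∃ δ > (0:ℝ), ∀ P : IntervalPartition a b, ∀ τ : ℕ → ℝ,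
      (∀ j < P.n, τ j ∈ Set.Icc (P.y j) (P.y (j + 1))) →
      (∀ j < P.n, ∀ s' ∈ Set.Icc (P.y j) (P.y (j + 1)), ∀ t ∈ Set.Icc (P.y j) (P.y (j + 1)),
        ‖f s' - f t‖ ≤ δ) →
      ((curveLength f a b).toReal - δ < vsum f P) →
      ∀ (R : IntervalPartition a b) (s : ℕ → ℕ), Monotone s → s 0 = 0 → s P.n = R.n →
      (∀ i ≤ P.n, R.y (s i) = P.y i) →
      ∀ τ' : ℕ → ℝ, (∀ j < R.n, τ' j ∈ Set.Icc (R.y j) (R.y (j + 1))) →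
      |rsum f F P τ - rsum f F R τ'| ≤ 1 / (k + 1) :=
    fun k => key_estimate hab hcf hrf hF (by positivity)
  choose κ hκpos hκ using hkeyE
  -- pairwise estimate for two good partitions
  have pair : ∀ (k : ℕ) (P P' : IntervalPartition a b) (τ τ' : ℕ → ℝ), ValidTags P τ →
      ValidTags P' τ' → Good f a b (κ k) P → Good f a b (κ k) P' →
      |rsum f F P τ - rsum f F P' τ'| ≤ 2 * (1 / (k + 1)) := by
    intro k P P' τ τ' hτ hτ' hP hP'
    obtain ⟨R, s, s', hs1, hs1', hs2, hs2', hs3, hs3', hs4, hs4', -⟩ :=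
      exists_refinement hab P P'
    have h1 := hκ k P τ hτ hP.1 hP.2 R s hs1 hs2 hs3 hs4 R.y (validTags_y R)
    have h2 := hκ k P' τ' hτ' hP'.1 hP'.2 R s' hs1' hs2' hs3' hs4' R.y (validTags_y R)
    calc |rsum f F P τ - rsum f F P' τ'|
        ≤ |rsum f F P τ - rsum f F R R.y| + |rsum f F R R.y - rsum f F P' τ'| :=
          abs_sub_le _ _ _
      _ ≤ 1 / (k + 1) + 1 / (k + 1) := add_le_add h1 (by rwa [abs_sub_comm])
      _ = 2 * (1 / (k + 1)) := by ring
  -- a decreasing sequence of goodness parameters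
  let d : ℕ → ℝ := fun k => Nat.rec (min (κ 0) 1)
    (fun k dk => min dk (κ (k + 1))) k
  have hd0 : ∀ k, 0 < d k := by
    intro k
    induction k with
    | zero => exact lt_min (hκpos 0) one_pos
    | succ k ih => exact lt_min ih (hκpos (k + 1))
  have hdκ : ∀ k, d k ≤ κ k := by
    intro k
    cases k with
    | zero => exact min_le_left _ _
    | succ k => exact min_le_right _ _
  have hdanti : ∀ j k, j ≤ k → d k ≤ d j := by
    intro j k hjk
    induction k with
    | zero => rw [Nat.le_zero.mp hjk]
    | succ k ih =>
      rcases Nat.lt_or_ge j (k + 1) with h | h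
      · exact le_trans (min_le_left _ _) (ih (Nat.lt_succ_iff.mp h))
      · rw [Nat.le_antisymm hjk h]
  -- good partitions for each parameter
  have hPk : ∀ k : ℕ, ∃ P : IntervalPartition a b, Good f a b (d k) P :=
    fun k => exists_good hab hcf hrf (hd0 k)
  choose Pseq hPseq using hPk
  set c : ℕ → ℝ := fun k => rsum f F (Pseq k) ((Pseq k).y) with hcdef
  have hc : ∀ j k, j ≤ k → |c j - c k| ≤ 2 * (1 / (j + 1)) := by
    intro j k hjk
    exact pair j (Pseq j) (Pseq k) _ _ (validTags_y _) (validTags_y _)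
      ((hPseq j).mono (hdκ j)) ((hPseq k).mono (le_trans (hdanti j k hjk) (hdκ j)))
  have hdist : ∀ n m N : ℕ, N ≤ n → N ≤ m → dist (c n) (c m) ≤ 4 * (1 / ((N:ℝ) + 1)) := by
    intro n m N hn hm
    rw [Real.dist_eq]
    calc |c n - c m| ≤ |c N - c n| + |c N - c m| := by
          rw [abs_sub_comm (c N) (c n)]
          exact abs_sub_le _ _ _
      _ ≤ 2 * (1 / (N + 1)) + 2 * (1 / (N + 1)) := add_le_add (hc N n hn) (hc N m hm)
      _ = 4 * (1 / (N + 1)) := by ring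
  have h0 : Filter.Tendsto (fun N : ℕ => 4 * (1 / ((N:ℝ) + 1))) Filter.atTop (nhds 0) := by
    have h1 : Filter.Tendsto (fun N : ℕ => (1:ℝ) / (N + 1)) Filter.atTop (nhds 0) :=
      tendsto_one_div_add_atTop_nhds_zero_nat
    have := h1.const_mul (4:ℝ)
    simpa using this
  have hcauchy : CauchySeq c := cauchySeq_of_le_tendsto_0 _ hdist h0
  obtain ⟨L, hL⟩ := cauchySeq_tendsto_of_complete hcauchy
  refine ⟨L, ?_⟩
  intro ε hε
  obtain ⟨k, hk⟩ := exists_nat_gt (2 / ε)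
  have hk2 : 2 * (1 / ((k:ℝ) + 1)) ≤ ε := by
    rw [div_lt_iff₀ hε] at hk
    rw [mul_one_div, div_le_iff₀ (by positivity)]
    nlinarith [hk, hε]
  refine ⟨d k, hd0 k, ?_⟩
  intro P τ hτ hP
  have hbound : ∀ l, k ≤ l → |rsum f F P τ - c l| ≤ 2 * (1 / (k + 1)) := by
    intro l hl
    exact pair k P (Pseq l) τ _ hτ (validTags_y _) (hP.mono (hdκ k))
      ((hPseq l).mono (le_trans (hdanti k l hl) (hdκ k)))
  have htend : Filter.Tendsto (fun l => |rsum f F P τ - c l|) Filter.atTop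
      (nhds |rsum f F P τ - L|) := by
    exact ((tendsto_const_nhds (x := rsum f F P τ)).sub hL).abs
  have hfin : |rsum f F P τ - L| ≤ 2 * (1 / (k + 1)) :=
    le_of_tendsto htend (Filter.eventually_atTop.mpr ⟨k, hbound⟩)
  linarith [hfin, hk2]

/-- The good-limit value is the line integral. -/
lemma isLineIntegral_of_good (hab : a < b) (hcf : ContinuousOn f (Set.Icc a b))
    (hrf : curveLength f a b ≠ ⊤) {L : ℝ}
    (hL : ∀ ε > (0:ℝ), ∃ δ > (0:ℝ), ∀ P : IntervalPartition a b, ∀ τ : ℕ → ℝ,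
      ValidTags P τ → Good f a b δ P → |rsum f F P τ - L| ≤ ε) :
    IsLineIntegral F f a b L := by
  intro ε hε
  obtain ⟨δ, hδ, hδ'⟩ := hL (ε / 2) (half_pos hε)
  obtain ⟨μ, hμ, hμ'⟩ := mesh_good hab hcf hrf hδ
  refine ⟨μ, hμ, ?_⟩
  intro P hP ξ hξ
  classical
  set τ : ℕ → ℝ := fun j => if h : j < P.n then ξ ⟨j, h⟩ else P.y j with hτdef
  have hvalid : ValidTags P τ := by
    intro j hj
    simp only [hτdef, dif_pos hj]
    have e1 : P.y j = P.x (⟨j, hj⟩ : Fin P.n).castSucc := P.y_castSucc ⟨j, hj⟩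
    have e2 : P.y (j + 1) = P.x (⟨j, hj⟩ : Fin P.n).succ := P.y_succ' ⟨j, hj⟩
    rw [e1, e2]
    exact hξ _
  have hsum : (∑ i : Fin P.n, F (f (ξ i)) (f (P.x i.succ) - f (P.x i.castSucc)))
      = rsum f F P τ := by
    rw [rsum, ← Fin.sum_univ_eq_sum_range
      (fun j => F (f (τ j)) (f (P.y (j + 1)) - f (P.y j))) P.n]
    apply Finset.sum_congr rfl
    intro i _
    have e1 : P.y (i : ℕ) = P.x i.castSucc := P.y_castSucc i
    have e2 : P.y ((i : ℕ) + 1) = P.x i.succ := P.y_succ' i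
    have e3 : τ (i : ℕ) = ξ i := by
      simp only [hτdef, dif_pos i.isLt, Fin.eta]
    rw [e1, e2, e3]
  rw [hsum]
  have := hδ' P τ hvalid (hμ' P hP)
  linarith

end Limit
section Frechet

variable {M : ℕ} {f g : ℝ → EuclideanSpace ℝ (Fin M)} {a b c d : ℝ}

/-- Mapping a partition forward along an increasing homeomorphism. -/
def IntervalPartition.map (P : IntervalPartition a b) (φ : ℝ → ℝ) (hab : a ≤ b)
    (hφ : IsIncrHomeo φ a b c d) : IntervalPartition c d where
  n := P.n
  x := φ ∘ P.x
  mono := by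
    intro i j hij
    exact hφ.2.1 ⟨P.first_le_x i, P.x_le_last i⟩ ⟨P.first_le_x j, P.x_le_last j⟩ (P.mono hij)
  first := by
    show φ (P.x 0) = c
    rw [P.first, hφ.2.2.1]
  last := by
    show φ (P.x (Fin.last P.n)) = d
    rw [P.last, hφ.2.2.2]

lemma IntervalPartition.map_n (P : IntervalPartition a b) (φ : ℝ → ℝ) (hab : a ≤ b)
    (hφ : IsIncrHomeo φ a b c d) : (P.map φ hab hφ).n = P.n := rfl

lemma IntervalPartition.map_y (P : IntervalPartition a b) (φ : ℝ → ℝ) (hab : a ≤ b)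
    (hφ : IsIncrHomeo φ a b c d) (k : ℕ) : (P.map φ hab hφ).y k = φ (P.y k) := by
  by_cases hk : k ≤ P.n
  · rw [IntervalPartition.y_eq (P.map φ hab hφ) hk, IntervalPartition.y_eq P hk]
    rfl
  · rw [IntervalPartition.y_eq_neg (P.map φ hab hφ) hk, IntervalPartition.y_eq_neg P hk, hφ.2.2.2]

lemma IsIncrHomeo.surj (hab : a ≤ b) (hφ : IsIncrHomeo φ a b c d) :
    ∀ v ∈ Set.Icc c d, ∃ t ∈ Set.Icc a b, φ t = v := by
  intro v hv
  have h := intermediate_value_Icc hab hφ.1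
  rw [hφ.2.2.1, hφ.2.2.2] at h
  obtain ⟨t, ht, hφt⟩ := h hv
  exact ⟨t, ht, hφt⟩

lemma IsIncrHomeo.le_iff (hφ : IsIncrHomeo φ a b c d) {s t : ℝ} (hs : s ∈ Set.Icc a b)
    (ht : t ∈ Set.Icc a b) : φ s ≤ φ t ↔ s ≤ t := hφ.2.1.le_iff_le hs ht

/-- Pulling a partition back along an increasing homeomorphism. -/
lemma IntervalPartition.exists_pullback (hab : a ≤ b) (hφ : IsIncrHomeo φ a b c d)
    (Q : IntervalPartition c d) :
    ∃ P : IntervalPartition a b, P.n = Q.n ∧ ∀ k, φ (P.y k) = Q.y k := by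
  classical
  have hex : ∀ i : Fin (Q.n + 1), ∃ t ∈ Set.Icc a b, φ t = Q.x i :=
    fun i => hφ.surj hab _ ⟨Q.first_le_x i, Q.x_le_last i⟩
  choose t ht hφt using hex
  have hmono : StrictMono t := by
    intro i j hij
    have h1 : φ (t i) < φ (t j) := by rw [hφt, hφt]; exact Q.mono hij
    by_contra hc
    push_neg at hc
    have h2 : φ (t j) ≤ φ (t i) := (hφ.le_iff (ht j) (ht i)).mpr hc
    linarith
  have hinj := hφ.2.1.injOn
  have hfirst : t 0 = a := by
    apply hinj (ht 0) (Set.left_mem_Icc.mpr hab)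
    rw [hφt, Q.first, hφ.2.2.1]
  have hlast : t (Fin.last Q.n) = b := by
    apply hinj (ht (Fin.last Q.n)) (Set.right_mem_Icc.mpr hab)
    rw [hφt, Q.last, hφ.2.2.2]
  refine ⟨⟨Q.n, t, hmono, hfirst, hlast⟩, rfl, ?_⟩
  intro k
  set P : IntervalPartition a b := ⟨Q.n, t, hmono, hfirst, hlast⟩ with hPdef
  by_cases hk : k ≤ Q.n
  · rw [IntervalPartition.y_eq P hk, IntervalPartition.y_eq Q hk]
    exact hφt _
  · rw [IntervalPartition.y_eq_neg P hk, IntervalPartition.y_eq_neg Q hk, hφ.2.2.2]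

lemma norm_triangle4 (x y u v : EuclideanSpace ℝ (Fin M)) :
    ‖x - y‖ ≤ ‖u - v‖ + ‖x - u‖ + ‖y - v‖ := by
  have h : x - y = (x - u) + ((u - v) + (v - y)) := by abel
  calc ‖x - y‖ = ‖(x - u) + ((u - v) + (v - y))‖ := by rw [← h]
    _ ≤ ‖x - u‖ + (‖u - v‖ + ‖v - y‖) := le_trans (norm_add_le _ _)
        (by gcongr; exact norm_add_le _ _)
    _ = ‖u - v‖ + ‖x - u‖ + ‖y - v‖ := by rw [norm_sub_rev v y]; ring

/-- Comparison of inscribed sums for pointwise-close curves along matched partitions. -/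
lemma vsum_close {ε' : ℝ} (P : IntervalPartition a b) (Q : IntervalPartition c d) (hn : P.n = Q.n)
    (hclose : ∀ k ≤ P.n, ‖f (P.y k) - g (Q.y k)‖ ≤ ε') :
    vsum f P ≤ vsum g Q + 2 * P.n * ε' := by
  have h : vsum g Q = ∑ j ∈ Finset.range P.n, ‖g (Q.y (j + 1)) - g (Q.y j)‖ := by
    rw [vsum, hn]
  rw [h, vsum]
  have hterm : ∀ j ∈ Finset.range P.n, ‖f (P.y (j + 1)) - f (P.y j)‖
      ≤ ‖g (Q.y (j + 1)) - g (Q.y j)‖ + 2 * ε' := by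
    intro j hj
    have hjn := Finset.mem_range.mp hj
    have h1 := hclose (j + 1) (Nat.succ_le_of_lt hjn)
    have h2 := hclose j hjn.le
    have h3 := norm_triangle4 (f (P.y (j + 1))) (f (P.y j)) (g (Q.y (j + 1))) (g (Q.y j))
    linarith
  calc ∑ j ∈ Finset.range P.n, ‖f (P.y (j + 1)) - f (P.y j)‖
      ≤ ∑ j ∈ Finset.range P.n, (‖g (Q.y (j + 1)) - g (Q.y j)‖ + 2 * ε') :=
        Finset.sum_le_sum hterm
    _ = ∑ j ∈ Finset.range P.n, ‖g (Q.y (j + 1)) - g (Q.y j)‖ + 2 * P.n * ε' := by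
        simp only [Finset.sum_add_distrib, Finset.sum_const, Finset.card_range,
          nsmul_eq_mul]
        ring

lemma curveLength_le_of_frechet (hab : a < b) (hcd : c < d)
    (hfg : FrechetEquiv f a b g c d) (hrg : curveLength g c d ≠ ⊤) :
    curveLength f a b ≤ curveLength g c d := by
  refine iSup_le fun P => ?_
  rw [← vsum_eq_inscribedSum]
  rw [← ENNReal.ofReal_toReal hrg]
  apply ENNReal.ofReal_le_ofReal
  apply le_of_forall_pos_le_add
  intro ε hε
  have hε' : 0 < ε / (2 * P.n + 1) := by positivity
  obtain ⟨φ, hφ, hclose⟩ := hfg _ hε'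
  set Q := P.map φ hab.le hφ with hQdef
  have h1 : vsum f P ≤ vsum g Q + 2 * P.n * (ε / (2 * P.n + 1)) := by
    refine vsum_close P Q rfl ?_
    intro k _
    rw [P.map_y φ hab.le hφ k]
    exact (hclose _ (P.y_mem hab.le k)).le
  have h2 : vsum g Q ≤ (curveLength g c d).toReal := vsum_le_toReal g hrg Q
  have h3 : 2 * (P.n : ℝ) * (ε / (2 * P.n + 1)) ≤ ε := by
    rw [mul_div_assoc', div_le_iff₀ (by positivity)]
    nlinarith [hε, (Nat.cast_nonneg P.n : (0:ℝ) ≤ P.n)]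
  linarith

lemma curveLength_ge_of_frechet (hab : a < b) (hcd : c < d)
    (hfg : FrechetEquiv f a b g c d) (hrf : curveLength f a b ≠ ⊤) :
    curveLength g c d ≤ curveLength f a b := by
  refine iSup_le fun Q => ?_
  rw [← vsum_eq_inscribedSum]
  rw [← ENNReal.ofReal_toReal hrf]
  apply ENNReal.ofReal_le_ofReal
  apply le_of_forall_pos_le_add
  intro ε hε
  have hε' : 0 < ε / (2 * Q.n + 1) := by positivity
  obtain ⟨φ, hφ, hclose⟩ := hfg _ hε'
  obtain ⟨P, hPn, hPy⟩ := IntervalPartition.exists_pullback hab.le hφ Q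
  have h1 : vsum g Q ≤ vsum f P + 2 * Q.n * (ε / (2 * Q.n + 1)) := by
    refine vsum_close (f := g) (g := f) (ε' := ε / (2 * Q.n + 1)) Q P hPn.symm ?_
    intro k _
    rw [← hPy k, norm_sub_rev]
    exact (hclose _ (P.y_mem hab.le k)).le
  have h2 : vsum f P ≤ (curveLength f a b).toReal := vsum_le_toReal f hrf P
  have h3 : 2 * (Q.n : ℝ) * (ε / (2 * Q.n + 1)) ≤ ε := by
    rw [mul_div_assoc', div_le_iff₀ (by positivity)]
    nlinarith [hε, (Nat.cast_nonneg Q.n : (0:ℝ) ≤ Q.n)]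
  linarith

end Frechet
section Main

lemma single_le_vsum {M : ℕ} (f : ℝ → EuclideanSpace ℝ (Fin M)) {a b : ℝ}
    (P : IntervalPartition a b) {j : ℕ} (hj : j < P.n) :
    ‖f (P.y (j + 1)) - f (P.y j)‖ ≤ vsum f P := by
  unfold vsum
  exact Finset.single_le_sum (f := fun k => ‖f (P.y (k + 1)) - f (P.y k)‖)
    (fun i _ => norm_nonneg _) (Finset.mem_range.mpr hj)

set_option maxHeartbeats 1000000 in
theorem lineIntegral_eq_of_frechetEquiv' {M : ℕ} (a b c d : ℝ) (hab : a < b) (hcd : c < d)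
    (f g : ℝ → EuclideanSpace ℝ (Fin M))
    (hcf : ContinuousOn f (Set.Icc a b)) (hrf : curveLength f a b < ⊤)
    (hcg : ContinuousOn g (Set.Icc c d)) (hrg : curveLength g c d < ⊤)
    (hfg : FrechetEquiv f a b g c d)
    (F : EuclideanSpace ℝ (Fin M) → EuclideanSpace ℝ (Fin M) → ℝ)
    (hF : IsParametricIntegrand F) :
    ∃ L : ℝ, IsLineIntegral F f a b L ∧ IsLineIntegral F g c d L := by
  have hrf' : curveLength f a b ≠ ⊤ := hrf.ne
  have hrg' : curveLength g c d ≠ ⊤ := hrg.ne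
  obtain ⟨Lf, hLf⟩ := exists_goodLimit hab hcf hrf' hF
  obtain ⟨Lg, hLg⟩ := exists_goodLimit hcd hcg hrg' hF
  have hIf : IsLineIntegral F f a b Lf := isLineIntegral_of_good hab hcf hrf' hLf
  have hIg : IsLineIntegral F g c d Lg := isLineIntegral_of_good hcd hcg hrg' hLg
  have hll : (curveLength f a b).toReal = (curveLength g c d).toReal := by
    rw [le_antisymm (curveLength_le_of_frechet hab hcd hfg hrg')
      (curveLength_ge_of_frechet hab hcd hfg hrf')]
  have key : ∀ ε > (0:ℝ), |Lf - Lg| ≤ 3 * ε := by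
    intro ε hε
    obtain ⟨δf, hδf, hδf'⟩ := hLf ε hε
    obtain ⟨δg, hδg, hδg'⟩ := hLg ε hε
    set θ := min δf (δg / 2) with hθdef
    have hθ0 : 0 < θ := lt_min hδf (by linarith)
    obtain ⟨P, hPgood⟩ := exists_good hab hcf hrf' hθ0
    set n := P.n with hndef
    have hXf : IsCompact (f '' Set.Icc a b) := isCompact_Icc.image_of_continuousOn hcf
    have hXg : IsCompact (g '' Set.Icc c d) := isCompact_Icc.image_of_continuousOn hcg
    set r := (curveLength f a b).toReal + (curveLength g c d).toReal + 1 with hrdef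
    have hr0 : 0 ≤ r := by
      have := ENNReal.toReal_nonneg (a := curveLength f a b)
      have := ENNReal.toReal_nonneg (a := curveLength g c d)
      linarith
    have hK : IsCompact ((f '' Set.Icc a b ∪ g '' Set.Icc c d) ×ˢ
        Metric.closedBall (0 : EuclideanSpace ℝ (Fin M)) r) :=
      (hXf.union hXg).prod (isCompact_closedBall _ _)
    obtain ⟨η₂, hη₂, hmod₂⟩ := F_modulus_on hF hK (show (0:ℝ) < ε / (n + 1) by positivity)
    set ε' := min (η₂ / 2) (min (δg / 4) (δg / (4 * (n + 1)))) with hε'def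
    have hε'0 : 0 < ε' := lt_min (by linarith) (lt_min (by linarith) (by positivity))
    have hε'a : ε' ≤ η₂ / 2 := min_le_left _ _
    have hε'b : ε' ≤ δg / 4 := le_trans (min_le_right _ _) (min_le_left _ _)
    have hε'c : ε' ≤ δg / (4 * (n + 1)) := le_trans (min_le_right _ _) (min_le_right _ _)
    obtain ⟨φ, hφ, hclose⟩ := hfg ε' hε'0
    set Pg := P.map φ hab.le hφ with hPgdef
    have hPgy : ∀ k, Pg.y k = φ (P.y k) := P.map_y φ hab.le hφ
    have hPgn : Pg.n = n := rfl
    -- oscillation of g on the image partition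
    have hoscg : ∀ j < Pg.n, ∀ s ∈ Set.Icc (Pg.y j) (Pg.y (j + 1)),
        ∀ t ∈ Set.Icc (Pg.y j) (Pg.y (j + 1)), ‖g s - g t‖ ≤ δg := by
      intro j hj s hs t ht
      have hmem : ∀ z ∈ Set.Icc (Pg.y j) (Pg.y (j + 1)),
          ∃ σ ∈ Set.Icc a b, φ σ = z ∧ σ ∈ Set.Icc (P.y j) (P.y (j + 1)) := by
        intro z hz
        have hzcd : z ∈ Set.Icc c d :=
          ⟨le_trans (Pg.first_le_y j) hz.1, le_trans hz.2 (Pg.y_le_last (j + 1))⟩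
        obtain ⟨σ, hσ, hφσ⟩ := hφ.surj hab.le z hzcd
        refine ⟨σ, hσ, hφσ, ?_, ?_⟩
        · have h1 : φ (P.y j) ≤ φ σ := by rw [hφσ, ← hPgy j]; exact hz.1
          exact (hφ.le_iff (P.y_mem hab.le j) hσ).mp h1
        · have h1 : φ σ ≤ φ (P.y (j + 1)) := by rw [hφσ, ← hPgy (j + 1)]; exact hz.2
          exact (hφ.le_iff hσ (P.y_mem hab.le (j + 1))).mp h1
      obtain ⟨σ, hσab, hφσ, hσmem⟩ := hmem s hs
      obtain ⟨ρ, hρab, hφρ, hρmem⟩ := hmem t ht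
      have h1 : ‖g s - g t‖ ≤ ‖f σ - f ρ‖ + ‖g s - f σ‖ + ‖g t - f ρ‖ :=
        norm_triangle4 _ _ _ _
      have h2 : ‖f σ - f ρ‖ ≤ θ := hPgood.1 j hj σ hσmem ρ hρmem
      have h3 : ‖g s - f σ‖ ≤ ε' := by
        rw [← hφσ, norm_sub_rev]; exact (hclose σ hσab).le
      have h4 : ‖g t - f ρ‖ ≤ ε' := by
        rw [← hφρ, norm_sub_rev]; exact (hclose ρ hρab).le
      have h5 : θ ≤ δg / 2 := min_le_right _ _
      linarith
    -- inscribed sum of the image partition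
    have hvclose : vsum f P ≤ vsum g Pg + 2 * n * ε' := by
      refine vsum_close P Pg rfl ?_
      intro k _
      rw [hPgy k]
      exact (hclose _ (P.y_mem hab.le k)).le
    have h2nε' : 2 * (n:ℝ) * ε' ≤ δg / 2 := by
      have := hε'c
      have hN : (0:ℝ) < (n:ℝ) + 1 := by positivity
      have h1 : 2 * (n:ℝ) * ε' ≤ 2 * (n:ℝ) * (δg / (4 * (n + 1))) := by
        apply mul_le_mul_of_nonneg_left hε'c (by positivity)
      refine le_trans h1 ?_
      rw [mul_div_assoc', div_le_div_iff₀ (by positivity) (by norm_num)]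
      nlinarith [hδg, (Nat.cast_nonneg n : (0:ℝ) ≤ n)]
    have hvsg : (curveLength g c d).toReal - δg < vsum g Pg := by
      have hP2 := hPgood.2
      have h5 : θ ≤ δg / 2 := min_le_right _ _
      rw [← hll]
      linarith
    have hPggood : Good g c d δg Pg := ⟨hoscg, hvsg⟩
    have hsf := hδf' P P.y (validTags_y P) (hPgood.mono (min_le_left _ _))
    have hsg := hδg' Pg Pg.y (validTags_y Pg) hPggood
    -- the two Riemann sums are close
    have hsums : |rsum f F P P.y - rsum g F Pg Pg.y| ≤ ε := by
      have hterm : ∀ j ∈ Finset.range n,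
          |F (f (P.y j)) (f (P.y (j + 1)) - f (P.y j))
            - F (g (Pg.y j)) (g (Pg.y (j + 1)) - g (Pg.y j))| ≤ ε / (n + 1) := by
        intro j hj
        have hjn := Finset.mem_range.mp hj
        have hp1 : (f (P.y j), f (P.y (j + 1)) - f (P.y j)) ∈
            (f '' Set.Icc a b ∪ g '' Set.Icc c d) ×ˢ
              Metric.closedBall (0 : EuclideanSpace ℝ (Fin M)) r := by
          refine ⟨Or.inl (Set.mem_image_of_mem f (P.y_mem hab.le j)), ?_⟩
          rw [Metric.mem_closedBall, dist_zero_right]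
          refine le_trans (single_le_vsum f P hjn) ?_
          have := vsum_le_toReal f hrf' P
          have := ENNReal.toReal_nonneg (a := curveLength g c d)
          rw [hrdef]
          linarith
        have hp2 : (g (Pg.y j), g (Pg.y (j + 1)) - g (Pg.y j)) ∈
            (f '' Set.Icc a b ∪ g '' Set.Icc c d) ×ˢ
              Metric.closedBall (0 : EuclideanSpace ℝ (Fin M)) r := by
          refine ⟨Or.inr (Set.mem_image_of_mem g (Pg.y_mem hcd.le j)), ?_⟩
          rw [Metric.mem_closedBall, dist_zero_right]
          refine le_trans (single_le_vsum g Pg hjn) ?_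
          have := vsum_le_toReal g hrg' Pg
          have := ENNReal.toReal_nonneg (a := curveLength f a b)
          rw [hrdef]
          linarith
        have hd1 : ‖f (P.y j) - g (Pg.y j)‖ ≤ ε' := by
          rw [hPgy j]; exact (hclose _ (P.y_mem hab.le j)).le
        have hd2 : ‖(f (P.y (j + 1)) - f (P.y j)) - (g (Pg.y (j + 1)) - g (Pg.y j))‖
            ≤ 2 * ε' := by
          have e1 : ‖f (P.y (j + 1)) - g (Pg.y (j + 1))‖ ≤ ε' := by
            rw [hPgy (j + 1)]; exact (hclose _ (P.y_mem hab.le (j + 1))).le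
          calc ‖(f (P.y (j + 1)) - f (P.y j)) - (g (Pg.y (j + 1)) - g (Pg.y j))‖
              = ‖(f (P.y (j + 1)) - g (Pg.y (j + 1))) - (f (P.y j) - g (Pg.y j))‖ := by
                congr 1; abel
            _ ≤ ‖f (P.y (j + 1)) - g (Pg.y (j + 1))‖ + ‖f (P.y j) - g (Pg.y j)‖ :=
                norm_sub_le _ _
            _ ≤ 2 * ε' := by linarith
        have hdist : dist (f (P.y j), f (P.y (j + 1)) - f (P.y j))
            (g (Pg.y j), g (Pg.y (j + 1)) - g (Pg.y j)) ≤ η₂ := by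
          rw [Prod.dist_eq]
          apply max_le
          · rw [dist_eq_norm]; linarith
          · rw [dist_eq_norm]; linarith
        exact hmod₂ _ hp1 _ hp2 hdist
      have e1 : rsum f F P P.y
          = ∑ j ∈ Finset.range n, F (f (P.y j)) (f (P.y (j + 1)) - f (P.y j)) := rfl
      have e2 : rsum g F Pg Pg.y
          = ∑ j ∈ Finset.range n, F (g (Pg.y j)) (g (Pg.y (j + 1)) - g (Pg.y j)) := rfl
      rw [e1, e2, ← Finset.sum_sub_distrib]
      refine le_trans (Finset.abs_sum_le_sum_abs _ _) ?_
      refine le_trans (Finset.sum_le_sum hterm) ?_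
      rw [Finset.sum_const, Finset.card_range, nsmul_eq_mul, mul_div_assoc',
        div_le_iff₀ (by positivity : (0:ℝ) < (n:ℝ) + 1)]
      have hN : (0:ℝ) ≤ n := Nat.cast_nonneg n
      nlinarith [hε]
    calc |Lf - Lg| ≤ |Lf - rsum f F P P.y| + |rsum f F P P.y - Lg| := abs_sub_le _ _ _
      _ ≤ |Lf - rsum f F P P.y| + (|rsum f F P P.y - rsum g F Pg Pg.y|
          + |rsum g F Pg Pg.y - Lg|) := by
            have := abs_sub_le (rsum f F P P.y) (rsum g F Pg Pg.y) Lg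
            linarith
      _ ≤ ε + (ε + ε) := by
          rw [abs_sub_comm Lf]
          exact add_le_add hsf (add_le_add hsums hsg)
      _ = 3 * ε := by ring
  have hEq : Lf = Lg := by
    by_contra hne
    have habs : 0 < |Lf - Lg| := abs_pos.mpr (sub_ne_zero.mpr hne)
    have := key (|Lf - Lg| / 4) (by positivity)
    linarith
  exact ⟨Lf, hIf, hEq ▸ hIg⟩

end Main
/-- If `C ↔ f : [a,b] → ℝ^M` and `D ↔ g : [c,d] → ℝ^M` are continuous
rectifiable Fréchet equivalent curves and `F` is a parametric integrand, then the line
integrals (which exist) are equal: `∫_C F = ∫_D F`. -/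
theorem lineIntegral_eq_of_frechetEquiv {M : ℕ} (a b c d : ℝ) (hab : a < b) (hcd : c < d)
    (f g : ℝ → EuclideanSpace ℝ (Fin M))
    (hcf : ContinuousOn f (Set.Icc a b)) (hrf : curveLength f a b < ⊤)
    (hcg : ContinuousOn g (Set.Icc c d)) (hrg : curveLength g c d < ⊤)
    (hfg : FrechetEquiv f a b g c d)
    (F : EuclideanSpace ℝ (Fin M) → EuclideanSpace ℝ (Fin M) → ℝ)
    (hF : IsParametricIntegrand F) :
    ∃ L : ℝ, IsLineIntegral F f a b L ∧ IsLineIntegral F g c d L := by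
  exact lineIntegral_eq_of_frechetEquiv' a b c d hab hcd f g hcf hrf hcg hrg hfg F hF

end
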